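/- arXiv:2208.03265 — 4 statements merged into one kernel-verified Lean document; each statement's English description precedes it below -/
import Mathlib

section
/- False alarm probability bound by change of measure: Assume supp q ⊆ supp p. Then under P_p (all X_i i.i.d. with law p), for every threshold h ∈ ℝ, P_p(T_1 < ∞) ≤ e^{−h}. -/
open MeasureTheory ProbabilityTheory Real Filter
open scoped ENNReal NNReal

noncomputable section

namespace QCPD

variable {X : Type*}

/-- The measure on `X` induced by a probability mass function `p`. -/
def pmfMeasure [Fintype X] [MeasurableSpace X] (p : X → ℝ) : Measure X :=
  ∑ x : X, ENNReal.ofReal (p x) • Measure.dirac x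

/-- `p` is a probability mass function on the finite type `X`. -/
def IsPMF [Fintype X] (p : X → ℝ) : Prop := (∀ x, 0 ≤ p x) ∧ ∑ x, p x = 1

/-- Under `P`, the coordinates of `Ω = ℕ → X` are independent and the `i`-th
coordinate (representing `X_{i+1}`) has law given by the pmf `r i`.  For i.i.d.
pmfs this characterizes the infinite product measure. -/
def HasLaw [Fintype X] [MeasurableSpace X] (P : Measure (ℕ → X)) (r : ℕ → X → ℝ) : Prop :=
  iIndepFun (fun i (ω : ℕ → X) => ω i) P ∧
    ∀ i, P.map (fun ω => ω i) = pmfMeasure (r i)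

/-- The log-likelihood ratio `log (q x / p x)`, valued in the extended reals,
with the conventions `log 0 = −∞` (and `log ∞ = ∞`). -/
def llr (p q : X → ℝ) (x : X) : EReal :=
  ENNReal.log (ENNReal.ofReal (q x) / ENNReal.ofReal (p x))

/-- `S_n = ∑_{i=1}^n Z_i` where `Z_i = log (q (X_i) / p (X_i))`; the `i`-th
coordinate of `ω` represents `X_{i+1}`. -/
def llrSum (p q : X → ℝ) (n : ℕ) (ω : ℕ → X) : EReal :=
  ∑ i ∈ Finset.range n, llr p q (ω i)

/-- `T₁ = inf {n ≥ 1 : S_n ≥ h}`, with value `∞` if no such `n` exists. -/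
def T1 (p q : X → ℝ) (h : ℝ) (ω : ℕ → X) : ℕ∞ :=
  sInf ((↑) '' {n : ℕ | 1 ≤ n ∧ (h : EReal) ≤ llrSum p q n ω})

/-- Kullback–Leibler divergence `D(q‖p) = ∑_{x ∈ supp q} q x · log (q x / p x)`. -/
def KL [Fintype X] (q p : X → ℝ) : ℝ :=
  ∑ x ∈ Finset.univ.filter (fun x => 0 < q x), q x * Real.log (q x / p x)

set_option linter.unusedSectionVars false

section Aux

variable [Fintype X] [Nonempty X] [MeasurableSpace X] [DiscreteMeasurableSpace X]
variable (p q : X → ℝ) (h : ℝ)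

/-- `D n` : event that `S_n ≥ h` (and `n ≥ 1`). -/
def Dset (n : ℕ) : Set (ℕ → X) := {ω | 1 ≤ n ∧ (h : EReal) ≤ llrSum p q n ω}

/-- First time `n` that `D n` occurs. -/
def Eset (n : ℕ) : Set (ℕ → X) :=
  Dset p q h n \ ⋃ (k : ℕ) (_ : k < n), Dset p q h k

/-- Extension of a finite word to an infinite one. -/
def extv {n : ℕ} (v : Fin n → X) : ℕ → X :=
  fun i => if hi : i < n then v ⟨i, hi⟩ else Classical.arbitrary X

/-- Cylinder set. -/
def cylP {n : ℕ} (v : Fin n → X) : Set (ℕ → X) := {ω | ∀ i : Fin n, ω (i : ℕ) = v i}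

lemma llrSum_congr {n : ℕ} {ω ω' : ℕ → X} (hag : ∀ i < n, ω i = ω' i) :
    llrSum p q n ω = llrSum p q n ω' :=
  Finset.sum_congr rfl fun i hi => by rw [hag i (Finset.mem_range.1 hi)]

lemma mem_Dset_congr {n : ℕ} {ω ω' : ℕ → X} (hag : ∀ i < n, ω i = ω' i) :
    ω ∈ Dset p q h n ↔ ω' ∈ Dset p q h n := by
  simp only [Dset, Set.mem_setOf_eq, llrSum_congr p q hag]

lemma mem_Eset_congr {n : ℕ} {ω ω' : ℕ → X} (hag : ∀ i < n, ω i = ω' i) :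
    ω ∈ Eset p q h n ↔ ω' ∈ Eset p q h n := by
  have hD : ∀ k ≤ n, (ω ∈ Dset p q h k ↔ ω' ∈ Dset p q h k) := fun k hk =>
    mem_Dset_congr p q h fun i hi => hag i (lt_of_lt_of_le hi hk)
  simp only [Eset, Set.mem_diff, Set.mem_iUnion, not_exists]
  constructor
  · rintro ⟨h1, h2⟩
    exact ⟨(hD n le_rfl).1 h1, fun k hk hk' => h2 k hk ((hD k hk.le).2 hk')⟩
  · rintro ⟨h1, h2⟩
    exact ⟨(hD n le_rfl).2 h1, fun k hk hk' => h2 k hk ((hD k hk.le).1 hk')⟩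

lemma T1_ne_top_iff {ω : ℕ → X} : T1 p q h ω ≠ ⊤ ↔ ∃ n, ω ∈ Dset p q h n := by
  constructor
  · intro hne
    by_contra hc
    push_neg at hc
    have hempty : {n : ℕ | 1 ≤ n ∧ (h : EReal) ≤ llrSum p q n ω} = ∅ := by
      ext n
      simp only [Set.mem_setOf_eq, Set.mem_empty_iff_false, iff_false]
      exact fun hn => hc n hn
    rw [T1, hempty, Set.image_empty] at hne
    simp at hne
  · rintro ⟨n, hn⟩
    intro htop
    have h1 : T1 p q h ω ≤ (n : ℕ∞) := sInf_le ⟨n, hn, rfl⟩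
    rw [htop] at h1
    exact (lt_of_le_of_lt h1 (WithTop.coe_lt_top n)).ne rfl

lemma iUnion_Eset : (⋃ n, Eset p q h n) = ⋃ n, Dset p q h n := by
  classical
  apply Set.Subset.antisymm
  · exact Set.iUnion_mono fun n => Set.diff_subset
  · intro ω hω
    rw [Set.mem_iUnion] at hω
    obtain ⟨n, hn⟩ := hω
    have hex : ∃ n, ω ∈ Dset p q h n := ⟨n, hn⟩
    refine Set.mem_iUnion.2 ⟨Nat.find hex, ⟨Nat.find_spec hex, ?_⟩⟩
    simp only [Set.mem_iUnion, not_exists]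
    exact fun k hk => Nat.find_min hex hk

lemma Eset_disjoint : Pairwise (Function.onFun Disjoint (Eset p q h)) := by
  have key : ∀ m n : ℕ, m < n → Disjoint (Eset p q h m) (Eset p q h n) := by
    intro m n hlt
    refine Set.disjoint_left.2 fun ω hm hn => ?_
    have h2 : ω ∉ ⋃ (k : ℕ) (_ : k < n), Dset p q h k := hn.2
    exact h2 (Set.mem_iUnion.2 ⟨m, Set.mem_iUnion.2 ⟨hlt, hm.1⟩⟩)
  intro m n hmn
  rcases lt_or_gt_of_ne hmn with hlt | hlt
  · exact key m n hlt
  · exact (key n m hlt).symm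

lemma cylP_agree {n : ℕ} {v : Fin n → X} {ω : ℕ → X} (hω : ω ∈ cylP v) :
    ∀ i < n, ω i = extv v i := by
  intro i hi
  rw [extv, dif_pos hi]
  exact hω ⟨i, hi⟩

lemma cylP_disjoint {n : ℕ} {v v' : Fin n → X} (hvv' : v ≠ v') :
    Disjoint (cylP v) (cylP v') := by
  refine Set.disjoint_left.2 fun ω hv hv' => hvv' ?_
  funext i
  rw [← hv i, ← hv' i]

lemma cylP_meas {n : ℕ} (v : Fin n → X) : MeasurableSet (cylP v) := by
  have : cylP v = ⋂ i : Fin n, (fun ω : ℕ → X => ω (i : ℕ)) ⁻¹' {v i} := by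
    ext ω
    simp [cylP, Set.mem_iInter]
  rw [this]
  exact MeasurableSet.iInter fun i => (measurable_pi_apply _) (measurableSet_singleton _)

lemma cyl_inter_of_mem {n : ℕ} {v : Fin n → X} (hc : extv v ∈ Eset p q h n) :
    cylP v ∩ Eset p q h n = cylP v :=
  Set.inter_eq_left.2 fun ω hω => (mem_Eset_congr p q h (cylP_agree hω)).2 hc

lemma cyl_inter_of_not_mem {n : ℕ} {v : Fin n → X} (hc : extv v ∉ Eset p q h n) :
    cylP v ∩ Eset p q h n = ∅ := by
  ext ω
  simp only [Set.mem_inter_iff, Set.mem_empty_iff_false, iff_false, not_and]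
  exact fun hω hE => hc ((mem_Eset_congr p q h (cylP_agree hω)).1 hE)

lemma Eset_eq_iUnion (n : ℕ) :
    Eset p q h n = ⋃ v : Fin n → X, cylP v ∩ Eset p q h n := by
  ext ω
  simp only [Set.mem_iUnion, Set.mem_inter_iff]
  constructor
  · intro hω
    exact ⟨fun i => ω (i : ℕ), fun i => rfl, hω⟩
  · rintro ⟨v, _, hω⟩
    exact hω

lemma Eset_meas (n : ℕ) : MeasurableSet (Eset p q h n) := by
  rw [Eset_eq_iUnion]
  refine MeasurableSet.iUnion fun v => ?_
  by_cases hc : extv v ∈ Eset p q h n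
  · rw [cyl_inter_of_mem p q h hc]; exact cylP_meas v
  · rw [cyl_inter_of_not_mem p q h hc]; exact MeasurableSet.empty

lemma pmfMeasure_singleton (r : X → ℝ) (x : X) :
    pmfMeasure r {x} = ENNReal.ofReal (r x) := by
  rw [pmfMeasure, Measure.finset_sum_apply]
  rw [Finset.sum_eq_single x]
  · simp [Measure.smul_apply, Measure.dirac_apply]
  · intro y _ hyx
    simp [Measure.smul_apply, Measure.dirac_apply, Set.indicator_of_notMem, hyx]
  · intro hx
    exact absurd (Finset.mem_univ x) hx

lemma measure_cylP (P : Measure (ℕ → X)) (hP : HasLaw P (fun _ => p))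
    {n : ℕ} (v : Fin n → X) :
    P (cylP v) = ∏ i : Fin n, ENNReal.ofReal (p (v i)) := by
  classical
  set sets : ℕ → Set X := fun i => if hi : i < n then {v ⟨i, hi⟩} else Set.univ with hsets
  have hmeas : ∀ i ∈ Finset.range n, MeasurableSet (sets i) := fun i _ => by
    by_cases hi : i < n <;> simp [hsets, hi]
  have hind := (iIndepFun_iff_measure_inter_preimage_eq_mul.1 hP.1) (Finset.range n) hmeas
  have hset : (⋂ i ∈ Finset.range n, (fun ω : ℕ → X => ω i) ⁻¹' sets i) = cylP v := by
    ext ω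
    simp only [Set.mem_iInter, Finset.mem_range, cylP, Set.mem_setOf_eq, Set.mem_preimage]
    constructor
    · intro H i
      have := H (i : ℕ) i.2
      simp only [hsets] at this
      rwa [dif_pos i.2, Set.mem_singleton_iff, Fin.eta] at this
    · intro H i hi
      simp only [hsets, dif_pos hi, Set.mem_singleton_iff]
      exact H ⟨i, hi⟩
  rw [hset] at hind
  rw [hind, ← Fin.prod_univ_eq_prod_range (fun i => P ((fun ω : ℕ → X => ω i) ⁻¹' sets i)) n]
  refine Finset.prod_congr rfl fun i _ => ?_
  have hseti : sets (i : ℕ) = {v i} := by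
    simp only [hsets, dif_pos i.2, Fin.eta]
  rw [hseti, ← Measure.map_apply (measurable_pi_apply (i : ℕ)) (measurableSet_singleton (v i)),
    hP.2 (i : ℕ), pmfMeasure_singleton]

lemma measure_cyl_inter (P : Measure (ℕ → X)) (hP : HasLaw P (fun _ => p))
    {n : ℕ} (v : Fin n → X) :
    P (cylP v ∩ Eset p q h n) =
      Set.indicator {v : Fin n → X | extv v ∈ Eset p q h n}
        (fun v => ∏ i : Fin n, ENNReal.ofReal (p (v i))) v := by
  by_cases hc : extv v ∈ Eset p q h n
  · rw [Set.indicator_of_mem (show v ∈ {v : Fin n → X | extv v ∈ Eset p q h n} from hc),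
      cyl_inter_of_mem p q h hc, measure_cylP p P hP]
  · rw [Set.indicator_of_notMem (show v ∉ {v : Fin n → X | extv v ∈ Eset p q h n} from hc),
      cyl_inter_of_not_mem p q h hc, measure_empty]

lemma measure_Eset (P : Measure (ℕ → X)) (hP : HasLaw P (fun _ => p)) (n : ℕ) :
    P (Eset p q h n) =
      ∑ v : Fin n → X, Set.indicator {v : Fin n → X | extv v ∈ Eset p q h n}
        (fun v => ∏ i : Fin n, ENNReal.ofReal (p (v i))) v := by
  have hrw := congrArg P (Eset_eq_iUnion p q h n)
  rw [hrw, measure_iUnion, tsum_fintype]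
  · exact Finset.sum_congr rfl fun v _ => measure_cyl_inter p q h P hP v
  · intro v v' hvv'
    exact (cylP_disjoint hvv').mono Set.inter_subset_left Set.inter_subset_left
  · intro v
    by_cases hc : extv v ∈ Eset p q h n
    · rw [cyl_inter_of_mem p q h hc]; exact cylP_meas v
    · rw [cyl_inter_of_not_mem p q h hc]; exact MeasurableSet.empty

lemma coe_sum_EReal {ι : Type*} (s : Finset ι) (f : ι → ℝ) :
    ((∑ i ∈ s, f i : ℝ) : EReal) = ∑ i ∈ s, (f i : EReal) :=
  map_sum (⟨⟨Real.toEReal, EReal.coe_zero⟩, EReal.coe_add⟩ : ℝ →+ EReal) f s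

lemma prod_bound (hp : IsPMF p) (hq : IsPMF q)
    {n : ℕ} (v : Fin n → X) (hv : (h : EReal) ≤ llrSum p q n (extv v)) :
    ∏ i : Fin n, ENNReal.ofReal (p (v i)) ≤
      ENNReal.ofReal (Real.exp (-h)) * ∏ i : Fin n, ENNReal.ofReal (q (v i)) := by
  have hext : ∀ i : Fin n, extv v (i : ℕ) = v i := fun i => by
    rw [extv, dif_pos i.2, Fin.eta]
  by_cases hpos : ∀ i : Fin n, 0 < p (v i)
  swap
  · push_neg at hpos
    obtain ⟨i, hi⟩ := hpos
    have hz : ENNReal.ofReal (p (v i)) = 0 := ENNReal.ofReal_eq_zero.2 hi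
    rw [Finset.prod_eq_zero (Finset.mem_univ i) hz]
    exact zero_le
  have hqpos : ∀ i : Fin n, 0 < q (v i) := by
    by_contra hq0
    push_neg at hq0
    obtain ⟨i, hqi⟩ := hq0
    have hqz : q (v i) = 0 := le_antisymm hqi (hq.1 _)
    have hterm : llr p q (extv v (i : ℕ)) = ⊥ := by
      rw [hext i, llr, hqz]
      simp [ENNReal.log_zero]
    have hsum : llrSum p q n (extv v) = ⊥ := by
      rw [llrSum, ← Finset.add_sum_erase _ _ (Finset.mem_range.2 i.2), hterm, EReal.bot_add]
    rw [hsum] at hv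
    exact (EReal.bot_lt_coe h).not_ge hv
  have hterm : ∀ i : Fin n, llr p q (extv v (i : ℕ)) =
      ((Real.log (q (v i) / p (v i)) : ℝ) : EReal) := fun i => by
    rw [hext i, llr, ← ENNReal.ofReal_div_of_pos (hpos i),
      ENNReal.log_ofReal_of_pos (div_pos (hqpos i) (hpos i))]
  have hsum : llrSum p q n (extv v) =
      ((∑ i : Fin n, Real.log (q (v i) / p (v i)) : ℝ) : EReal) := by
    rw [llrSum, ← Fin.sum_univ_eq_sum_range (fun i => llr p q (extv v i)) n,
      coe_sum_EReal]
    exact Finset.sum_congr rfl fun i _ => hterm i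
  rw [hsum] at hv
  have hv' : h ≤ ∑ i : Fin n, Real.log (q (v i) / p (v i)) := EReal.coe_le_coe_iff.1 hv
  have hratpos : ∀ i : Fin n, 0 < q (v i) / p (v i) := fun i => div_pos (hqpos i) (hpos i)
  have hlog : ∑ i : Fin n, Real.log (q (v i) / p (v i)) =
      Real.log (∏ i : Fin n, q (v i) / p (v i)) :=
    (Real.log_prod fun i _ => (hratpos i).ne').symm
  have hexp : Real.exp h ≤ ∏ i : Fin n, q (v i) / p (v i) :=
    (Real.le_log_iff_exp_le (Finset.prod_pos fun i _ => hratpos i)).1 (hlog ▸ hv')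
  have hPpos : 0 < ∏ i : Fin n, p (v i) := Finset.prod_pos fun i _ => hpos i
  have hprod : (∏ i : Fin n, q (v i) / p (v i)) =
      (∏ i : Fin n, q (v i)) / ∏ i : Fin n, p (v i) := Finset.prod_div_distrib _ _
  rw [hprod] at hexp
  have hple : ∏ i : Fin n, p (v i) ≤ Real.exp (-h) * ∏ i : Fin n, q (v i) := by
    rw [Real.exp_neg]
    have h1 : Real.exp h * ∏ i : Fin n, p (v i) ≤ ∏ i : Fin n, q (v i) :=
      (le_div_iff₀ hPpos).1 hexp
    calc ∏ i : Fin n, p (v i)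
        = (Real.exp h)⁻¹ * (Real.exp h * ∏ i : Fin n, p (v i)) := by
          rw [← mul_assoc, inv_mul_cancel₀ (Real.exp_ne_zero h), one_mul]
      _ ≤ (Real.exp h)⁻¹ * ∏ i : Fin n, q (v i) := by
          exact mul_le_mul_of_nonneg_left h1 (inv_nonneg.2 (Real.exp_nonneg h))
  calc ∏ i : Fin n, ENNReal.ofReal (p (v i))
      = ENNReal.ofReal (∏ i : Fin n, p (v i)) :=
        (ENNReal.ofReal_prod_of_nonneg fun i _ => (hpos i).le).symm
    _ ≤ ENNReal.ofReal (Real.exp (-h) * ∏ i : Fin n, q (v i)) :=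
        ENNReal.ofReal_le_ofReal hple
    _ = ENNReal.ofReal (Real.exp (-h)) * ENNReal.ofReal (∏ i : Fin n, q (v i)) :=
        ENNReal.ofReal_mul (Real.exp_nonneg _)
    _ = ENNReal.ofReal (Real.exp (-h)) * ∏ i : Fin n, ENNReal.ofReal (q (v i)) := by
        rw [ENNReal.ofReal_prod_of_nonneg fun i _ => hq.1 (v i)]

lemma sum_prod_q (hq1 : ∑ x : X, ENNReal.ofReal (q x) = 1) (m : ℕ) :
    ∑ b : Fin m → X, ∏ i : Fin m, ENNReal.ofReal (q (b i)) = 1 := by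
  classical
  rw [← Fintype.piFinset_univ,
    Finset.sum_prod_piFinset (Finset.univ : Finset X) (fun (_ : Fin m) (x : X) => ENNReal.ofReal (q x))]
  simp [hq1]

lemma marg (hq1 : ∑ x : X, ENNReal.ofReal (q x) = 1)
    {N n : ℕ} (hn : n ≤ N) (g : (Fin n → X) → ℝ≥0∞) :
    ∑ w : Fin N → X, g (fun i => w (Fin.castLE hn i)) * ∏ j : Fin N, ENNReal.ofReal (q (w j))
      = ∑ v : Fin n → X, g v * ∏ i : Fin n, ENNReal.ofReal (q (v i)) := by
  classical
  obtain ⟨m, rfl⟩ := Nat.exists_eq_add_of_le hn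
  set e : ((Fin n → X) × (Fin m → X)) ≃ (Fin (n + m) → X) :=
    ((Equiv.sumArrowEquivProdArrow (Fin n) (Fin m) X).symm.trans
      (Equiv.arrowCongr finSumFinEquiv (Equiv.refl X))) with he
  have heval₁ : ∀ (a : Fin n → X) (b : Fin m → X) (i : Fin n),
      e (a, b) (Fin.castAdd m i) = a i := fun a b i => by
    simp [he, Equiv.arrowCongr, Equiv.sumArrowEquivProdArrow,
      finSumFinEquiv_symm_apply_castAdd]
  have heval₂ : ∀ (a : Fin n → X) (b : Fin m → X) (i : Fin m),
      e (a, b) (Fin.natAdd n i) = b i := fun a b i => by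
    simp [he, Equiv.arrowCongr, Equiv.sumArrowEquivProdArrow,
      finSumFinEquiv_symm_apply_natAdd]
  rw [← Equiv.sum_comp e
    (fun w : Fin (n + m) → X =>
      g (fun i => w (Fin.castLE hn i)) * ∏ j : Fin (n + m), ENNReal.ofReal (q (w j)))]
  rw [Fintype.sum_prod_type]
  refine Finset.sum_congr rfl fun a _ => ?_
  have hstep : ∀ b : Fin m → X,
      g (fun i => e (a, b) (Fin.castLE hn i)) * ∏ j : Fin (n + m), ENNReal.ofReal (q (e (a, b) j))
        = g a * ((∏ i : Fin n, ENNReal.ofReal (q (a i))) *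
            ∏ i : Fin m, ENNReal.ofReal (q (b i))) := by
    intro b
    have hpre : (fun i : Fin n => e (a, b) (Fin.castLE hn i)) = a := by
      funext i
      have : Fin.castLE hn i = Fin.castAdd m i := rfl
      rw [this, heval₁]
    have hsplit : ∏ j : Fin (n + m), ENNReal.ofReal (q (e (a, b) j))
        = (∏ i : Fin n, ENNReal.ofReal (q (a i))) *
            ∏ i : Fin m, ENNReal.ofReal (q (b i)) := by
      rw [Fin.prod_univ_add]
      congr 1
      · exact Finset.prod_congr rfl fun i _ => by rw [heval₁]
      · exact Finset.prod_congr rfl fun i _ => by rw [heval₂]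
    rw [hpre, hsplit]
  calc ∑ b : Fin m → X,
        g (fun i => e (a, b) (Fin.castLE hn i)) *
          ∏ j : Fin (n + m), ENNReal.ofReal (q (e (a, b) j))
      = ∑ b : Fin m → X, g a * ((∏ i : Fin n, ENNReal.ofReal (q (a i))) *
          ∏ i : Fin m, ENNReal.ofReal (q (b i))) :=
        Finset.sum_congr rfl fun b _ => hstep b
    _ = g a * ∏ i : Fin n, ENNReal.ofReal (q (a i)) := by
        rw [← Finset.mul_sum]
        rw [show (∑ b : Fin m → X, (∏ i : Fin n, ENNReal.ofReal (q (a i))) *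
            ∏ i : Fin m, ENNReal.ofReal (q (b i)))
          = (∏ i : Fin n, ENNReal.ofReal (q (a i))) *
            ∑ b : Fin m → X, ∏ i : Fin m, ENNReal.ofReal (q (b i)) from
          (Finset.mul_sum _ _ _).symm]
        rw [sum_prod_q q hq1, mul_one]

/-- Q-weight of the stage-`n` stopping event. -/
def Qn (n : ℕ) : ℝ≥0∞ :=
  ∑ v : Fin n → X, Set.indicator {v : Fin n → X | extv v ∈ Eset p q h n} (fun _ => 1) v *
    ∏ i : Fin n, ENNReal.ofReal (q (v i))

lemma measure_Eset_le (hp : IsPMF p) (hq : IsPMF q)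
    (P : Measure (ℕ → X)) (hP : HasLaw P (fun _ => p)) (n : ℕ) :
    P (Eset p q h n) ≤ ENNReal.ofReal (Real.exp (-h)) * Qn p q h n := by
  rw [measure_Eset p q h P hP n, Qn, Finset.mul_sum]
  refine Finset.sum_le_sum fun v _ => ?_
  by_cases hc : extv v ∈ Eset p q h n
  · rw [Set.indicator_of_mem (show v ∈ {v : Fin n → X | extv v ∈ Eset p q h n} from hc),
      Set.indicator_of_mem (show v ∈ {v : Fin n → X | extv v ∈ Eset p q h n} from hc),
      one_mul]
    exact prod_bound p q h hp hq v hc.1.2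
  · rw [Set.indicator_of_notMem (show v ∉ {v : Fin n → X | extv v ∈ Eset p q h n} from hc),
      Set.indicator_of_notMem (show v ∉ {v : Fin n → X | extv v ∈ Eset p q h n} from hc),
      zero_mul, mul_zero]

/-- Truncated prefix of a finite word. -/
def prefv (N : ℕ) (w : Fin N → X) (n : ℕ) : Fin n → X :=
  fun i => if hi : (i : ℕ) < N then w ⟨i, hi⟩ else Classical.arbitrary X

lemma inner_sum_le (N : ℕ) (w : Fin N → X) :
    ∑ n ∈ Finset.range N,
      Set.indicator {v : Fin n → X | extv v ∈ Eset p q h n} (fun _ => (1 : ℝ≥0∞)) (prefv N w n)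
        ≤ 1 := by
  classical
  set ω : ℕ → X := extv w with hω
  have hiff : ∀ n, n ≤ N → (extv (prefv N w n) ∈ Eset p q h n ↔ ω ∈ Eset p q h n) := by
    intro n hn
    refine mem_Eset_congr p q h fun i hi => ?_
    have hiN : i < N := lt_of_lt_of_le hi hn
    rw [hω, extv, extv, dif_pos hi, dif_pos hiN, prefv, dif_pos hiN]
  by_cases hex : ∃ n ∈ Finset.range N, ω ∈ Eset p q h n
  · obtain ⟨n₀, hn₀, hmem⟩ := hex
    rw [Finset.sum_eq_single_of_mem n₀ hn₀]
    · by_cases hc : extv (prefv N w n₀) ∈ Eset p q h n₀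
      · rw [Set.indicator_of_mem
          (show prefv N w n₀ ∈ {v : Fin n₀ → X | extv v ∈ Eset p q h n₀} from hc)]
      · rw [Set.indicator_of_notMem
          (show prefv N w n₀ ∉ {v : Fin n₀ → X | extv v ∈ Eset p q h n₀} from hc)]
        exact zero_le
    · intro n hn hne
      refine Set.indicator_of_notMem
        (show prefv N w n ∉ {v : Fin n → X | extv v ∈ Eset p q h n} from ?_) _
      intro hc
      have hmem' : ω ∈ Eset p q h n := (hiff n (Finset.mem_range.1 hn).le).1 hc
      exact Set.disjoint_left.1 (Eset_disjoint p q h hne) hmem' hmem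
  · push_neg at hex
    rw [Finset.sum_eq_zero]
    · exact zero_le
    · intro n hn
      refine Set.indicator_of_notMem
        (show prefv N w n ∉ {v : Fin n → X | extv v ∈ Eset p q h n} from ?_) _
      intro hc
      exact hex n hn ((hiff n (Finset.mem_range.1 hn).le).1 hc)

lemma tsum_Qn_le (hq1 : ∑ x : X, ENNReal.ofReal (q x) = 1) :
    ∑' n, Qn p q h n ≤ 1 := by
  classical
  refine ENNReal.tsum_le_of_sum_range_le fun N => ?_
  have hstep : ∀ n ∈ Finset.range N, Qn p q h n =
      ∑ w : Fin N → X,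
        Set.indicator {v : Fin n → X | extv v ∈ Eset p q h n} (fun _ => 1) (prefv N w n) *
          ∏ j : Fin N, ENNReal.ofReal (q (w j)) := by
    intro n hn
    have hnN : n ≤ N := (Finset.mem_range.1 hn).le
    rw [Qn, ← marg q hq1 hnN
      (Set.indicator {v : Fin n → X | extv v ∈ Eset p q h n} (fun _ => 1))]
    refine Finset.sum_congr rfl fun w _ => ?_
    have : (fun i : Fin n => w (Fin.castLE hnN i)) = prefv N w n := by
      funext i
      rw [prefv, dif_pos (lt_of_lt_of_le i.2 hnN)]
      rfl
    rw [this]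
  calc ∑ n ∈ Finset.range N, Qn p q h n
      = ∑ n ∈ Finset.range N, ∑ w : Fin N → X,
          Set.indicator {v : Fin n → X | extv v ∈ Eset p q h n} (fun _ => 1) (prefv N w n) *
            ∏ j : Fin N, ENNReal.ofReal (q (w j)) := Finset.sum_congr rfl hstep
    _ = ∑ w : Fin N → X, (∑ n ∈ Finset.range N,
          Set.indicator {v : Fin n → X | extv v ∈ Eset p q h n} (fun _ => 1) (prefv N w n)) *
            ∏ j : Fin N, ENNReal.ofReal (q (w j)) := by
        rw [Finset.sum_comm]
        exact Finset.sum_congr rfl fun w _ => (Finset.sum_mul _ _ _).symm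
    _ ≤ ∑ w : Fin N → X, 1 * ∏ j : Fin N, ENNReal.ofReal (q (w j)) :=
        Finset.sum_le_sum fun w _ => mul_le_mul_left (inner_sum_le p q h N w) _
    _ = 1 := by
        simp only [one_mul]
        exact sum_prod_q q hq1 N

end Aux

/-- **False alarm probability bound by change of measure.** If `supp q ⊆ supp p`,
then under the i.i.d.-`p` measure, for every threshold `h`,
`P_p(T₁ < ∞) ≤ e^{−h}`. -/
theorem false_alarm_probability_bound
    [Fintype X] [Nonempty X] [MeasurableSpace X] [DiscreteMeasurableSpace X]
    (p q : X → ℝ) (hp : IsPMF p) (hq : IsPMF q)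
    (hsupp : ∀ x, 0 < q x → 0 < p x)
    (P : Measure (ℕ → X)) [IsProbabilityMeasure P] (hP : HasLaw P (fun _ => p))
    (h : ℝ) :
    P {ω | T1 p q h ω ≠ ⊤} ≤ ENNReal.ofReal (Real.exp (-h)) := by
  classical
  have hq1 : ∑ x : X, ENNReal.ofReal (q x) = 1 := by
    rw [← ENNReal.ofReal_sum_of_nonneg fun x _ => hq.1 x, hq.2, ENNReal.ofReal_one]
  have hset : {ω : ℕ → X | T1 p q h ω ≠ ⊤} = ⋃ n, Eset p q h n := by
    rw [iUnion_Eset]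
    ext ω
    simp only [Set.mem_setOf_eq, Set.mem_iUnion]
    exact T1_ne_top_iff p q h
  rw [hset, measure_iUnion (Eset_disjoint p q h) fun n => Eset_meas p q h n]
  calc ∑' n, P (Eset p q h n)
      ≤ ∑' n, ENNReal.ofReal (Real.exp (-h)) * Qn p q h n :=
        ENNReal.tsum_le_tsum fun n => measure_Eset_le p q h hp hq P hP n
    _ = ENNReal.ofReal (Real.exp (-h)) * ∑' n, Qn p q h n := ENNReal.tsum_mul_left
    _ ≤ ENNReal.ofReal (Real.exp (-h)) * 1 := mul_le_mul_right (tsum_Qn_le p q h hq1) _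
    _ = ENNReal.ofReal (Real.exp (-h)) := mul_one _

end QCPD
end
end

section
/- Mismatched delay bound: Let q' be a further probability mass function on X with supp q' ⊆ supp p ∩ supp q, suppose Δ := D(q'‖p) − D(q'‖q) > 0, and let h ≥ 0. Then under P_{q'} (the X_i i.i.d. with law q'), E[T_1] ≤ (h + C')/Δ, where C' := max_{x ∈ supp q'} log(q(x)/p(x)). -/
open MeasureTheory ProbabilityTheory Real Filter
open scoped ENNReal NNReal

noncomputable section

namespace QCPD

variable {X : Type*}

/-- Real-valued log-likelihood ratio. -/
def Zf (p q : X → ℝ) (x : X) : ℝ := Real.log (q x / p x)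

/-- Real-valued partial sums of the LLR along coordinates. -/
def Sf (p q : X → ℝ) (n : ℕ) (ω : ℕ → X) : ℝ := ∑ i ∈ Finset.range n, Zf p q (ω i)

/-- Real-valued version of the stopping time `T1`. -/
def tauf (p q : X → ℝ) (h : ℝ) (ω : ℕ → X) : ℕ∞ :=
  sInf ((↑) '' {n : ℕ | 1 ≤ n ∧ h ≤ Sf p q n ω})

lemma lt_tauf_iff {p q : X → ℝ} {h : ℝ} {ω : ℕ → X} {k : ℕ} :
    (k : ℕ∞) < tauf p q h ω ↔ ∀ m : ℕ, 1 ≤ m → m ≤ k → Sf p q m ω < h := by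
  constructor
  · intro hk m hm1 hmk
    by_contra hc
    push_neg at hc
    have h1 : tauf p q h ω ≤ (m : ℕ∞) := sInf_le ⟨m, ⟨hm1, hc⟩, rfl⟩
    have h2 := lt_of_lt_of_le hk h1
    exact absurd (Nat.cast_lt.mp h2) (not_lt.mpr hmk)
  · intro hall
    have h1 : ((k + 1 : ℕ) : ℕ∞) ≤ tauf p q h ω := by
      refine le_sInf ?_
      rintro _ ⟨n, ⟨hn1, hn2⟩, rfl⟩
      by_contra hc
      push_neg at hc
      have hnk : n ≤ k := Nat.lt_succ_iff.mp (Nat.cast_lt.mp hc)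
      exact absurd hn2 (not_le.mpr (hall n hn1 hnk))
    exact lt_of_lt_of_le (by exact_mod_cast Nat.lt_succ_self k) h1

lemma enat_coe_eq_tsum (m : ℕ∞) :
    (m : ℝ≥0∞) = ∑' k : ℕ, (if (k : ℕ∞) < m then (1 : ℝ≥0∞) else 0) := by
  induction m using ENat.recTopCoe with
  | top =>
    have : ∀ k : ℕ, (if (k : ℕ∞) < (⊤ : ℕ∞) then (1 : ℝ≥0∞) else 0) = 1 := by
      intro k; simp
    rw [tsum_congr this, ENNReal.tsum_const_eq_top_of_ne_zero one_ne_zero]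
    simp
  | coe n =>
    rw [ENat.toENNReal_coe]
    rw [tsum_eq_sum (s := Finset.range n)
      (by intro k hk; rw [if_neg]; exact fun hc => hk (Finset.mem_range.mpr (Nat.cast_lt.mp hc)))]
    rw [Finset.sum_congr rfl (fun k hk => if_pos (by exact_mod_cast Finset.mem_range.mp hk))]
    simp

/-- **Mismatched delay bound.** If `supp q' ⊆ supp p ∩ supp q`,
`Δ := D(q'‖p) − D(q'‖q) > 0`, and `h ≥ 0`, then under the i.i.d.-`q'` measure,
`E[T₁] ≤ (h + C')/Δ`, where `C' = max_{x ∈ supp q'} log (q x / p x)`. -/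
theorem mismatched_delay_bound
    [Fintype X] [Nonempty X] [MeasurableSpace X] [DiscreteMeasurableSpace X]
    (p q q' : X → ℝ) (hp : IsPMF p) (hq : IsPMF q) (hq' : IsPMF q')
    (hsupp : ∀ x, 0 < q' x → 0 < p x ∧ 0 < q x)
    (Δ : ℝ) (hΔ : Δ = KL q' p - KL q' q) (hΔpos : 0 < Δ)
    (h : ℝ) (hh : 0 ≤ h)
    (C' : ℝ) (hC' : C' = sSup {y : ℝ | ∃ x, 0 < q' x ∧ y = Real.log (q x / p x)})
    (P : Measure (ℕ → X)) [IsProbabilityMeasure P] (hP : HasLaw P (fun _ => q')) :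
    ∫⁻ ω, (T1 p q h ω : ℝ≥0∞) ∂P ≤ ENNReal.ofReal ((h + C') / Δ) := by
  classical
  obtain ⟨hIndep, hMap⟩ := hP
  obtain ⟨x0⟩ := ‹Nonempty X›
  -- support is nonempty
  have hex : ∃ x, 0 < q' x := by
    by_contra hc
    push_neg at hc
    have h0 : ∑ x, q' x = 0 := Finset.sum_eq_zero fun x _ => le_antisymm (hc x) (hq'.1 x)
    rw [hq'.2] at h0; norm_num at h0
  -- C' bounds Zf on the support
  have hsetfin : ({y : ℝ | ∃ x, 0 < q' x ∧ y = Real.log (q x / p x)}).Finite := by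
    have hsub : {y : ℝ | ∃ x, 0 < q' x ∧ y = Real.log (q x / p x)} ⊆
        Set.range fun x => Real.log (q x / p x) := by
      rintro y ⟨x, -, rfl⟩; exact ⟨x, rfl⟩
    exact (Set.finite_range _).subset hsub
  have hCge : ∀ x, 0 < q' x → Zf p q x ≤ C' := by
    intro x hx
    rw [hC']
    exact le_csSup hsetfin.bddAbove ⟨x, hx, rfl⟩
  -- mean of Zf under q' is Δ
  have hΔeq : ∑ x, q' x * Zf p q x = Δ := by
    have h1 : ∑ x, q' x * Zf p q x
        = ∑ x ∈ Finset.univ.filter (fun x => 0 < q' x), q' x * Zf p q x :=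
      (Finset.sum_subset (Finset.filter_subset _ _) (fun x _ hx => by
        have hx0 : q' x = 0 := le_antisymm
          (not_lt.mp fun hpos => hx (Finset.mem_filter.mpr ⟨Finset.mem_univ x, hpos⟩))
          (hq'.1 x)
        simp [hx0])).symm
    rw [h1, hΔ, KL, KL, ← Finset.sum_sub_distrib]
    refine Finset.sum_congr rfl fun x hx => ?_
    have hx' : 0 < q' x := (Finset.mem_filter.mp hx).2
    obtain ⟨hpx, hqx⟩ := hsupp x hx'
    rw [Zf, ← mul_sub]
    congr 1
    rw [Real.log_div hqx.ne' hpx.ne', Real.log_div hx'.ne' hpx.ne', Real.log_div hx'.ne' hqx.ne']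
    ring
  -- C' is positive
  have hC'pos : 0 < C' := by
    have hΔle : Δ ≤ C' := by
      rw [← hΔeq]
      calc ∑ x, q' x * Zf p q x ≤ ∑ x, q' x * C' := by
            refine Finset.sum_le_sum fun x _ => ?_
            rcases eq_or_lt_of_le (hq'.1 x) with h0 | h0
            · simp [← h0]
            · exact mul_le_mul_of_nonneg_left (hCge x h0) (hq'.1 x)
        _ = C' := by rw [← Finset.sum_mul, hq'.2, one_mul]
    linarith
  -- measurability
  have hZmeas : Measurable (Zf p q : X → ℝ) := Measurable.of_discrete
  have hSmeas : ∀ n, Measurable (Sf p q n) := fun n =>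
    Finset.measurable_sum _ fun i _ => hZmeas.comp (measurable_pi_apply i)
  have hsetmeas : ∀ k : ℕ, MeasurableSet {ω : ℕ → X | (k : ℕ∞) < tauf p q h ω} := by
    intro k
    have hrw : {ω : ℕ → X | (k : ℕ∞) < tauf p q h ω}
        = ⋂ (m : ℕ) (_ : 1 ≤ m) (_ : m ≤ k), {ω | Sf p q m ω < h} := by
      ext ω
      simp only [Set.mem_setOf_eq, Set.mem_iInter, lt_tauf_iff]
    rw [hrw]
    exact MeasurableSet.iInter fun m => MeasurableSet.iInter fun _ =>
      MeasurableSet.iInter fun _ => measurableSet_lt (hSmeas m) measurable_const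
  -- almost surely every coordinate is in the support of q'
  have hpmfapply : ∀ (s : Set X), pmfMeasure q' s
      = ∑ x : X, ENNReal.ofReal (q' x) * s.indicator 1 x := by
    intro s
    rw [pmfMeasure, Measure.finset_sum_apply]
    refine Finset.sum_congr rfl fun x _ => ?_
    rw [Measure.smul_apply, Measure.dirac_apply, smul_eq_mul]
  have hae : ∀ᵐ ω ∂P, ∀ i, 0 < q' (ω i) := by
    rw [ae_all_iff]
    intro i
    have hmeas : MeasurableSet {x : X | ¬ 0 < q' x} := .of_discrete
    rw [ae_iff]
    have hpre : {ω : ℕ → X | ¬ 0 < q' (ω i)} = (fun ω : ℕ → X => ω i) ⁻¹' {x | ¬ 0 < q' x} := rfl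
    rw [hpre, ← Measure.map_apply (measurable_pi_apply i) hmeas, hMap i, hpmfapply]
    refine Finset.sum_eq_zero fun x _ => ?_
    rcases eq_or_lt_of_le (hq'.1 x) with h0 | h0
    · simp [← h0]
    · rw [Set.indicator_of_notMem (by simpa using h0), mul_zero]
  -- a.e., T1 = tauf
  have hT1 : ∀ᵐ ω ∂P, ((T1 p q h ω : ℝ≥0∞)) = ((tauf p q h ω : ℝ≥0∞)) := by
    filter_upwards [hae] with ω hω
    have hsum : ∀ n, llrSum p q n ω = ((Sf p q n ω : ℝ) : EReal) := by
      intro n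
      have hms := map_sum (⟨⟨Real.toEReal, EReal.coe_zero⟩, EReal.coe_add⟩ : ℝ →+ EReal)
        (fun i => Zf p q (ω i)) (Finset.range n)
      simp only [AddMonoidHom.coe_mk, ZeroHom.coe_mk] at hms
      rw [llrSum, Sf, hms]
      refine Finset.sum_congr rfl fun i _ => ?_
      obtain ⟨hpx, hqx⟩ := hsupp _ (hω i)
      rw [llr, Zf, ← ENNReal.ofReal_div_of_pos hpx, ENNReal.log_ofReal_of_pos (div_pos hqx hpx)]
    have hTeq : T1 p q h ω = tauf p q h ω := by
      rw [T1, tauf]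
      congr 1
      ext n
      simp only [Set.mem_image, Set.mem_setOf_eq, hsum, EReal.coe_le_coe_iff]
    rw [hTeq]
  -- uniform bound on Zf
  set M : ℝ := Finset.univ.sup' Finset.univ_nonempty (fun x => |Zf p q x|) with hM
  have hMbound : ∀ x, |Zf p q x| ≤ M := by
    intro x
    rw [hM]
    exact Finset.le_sup' (fun x => |Zf p q x|) (Finset.mem_univ x)
  -- the summands of the stopped sum
  set F : ℕ → (ℕ → X) → ℝ := fun i ω =>
    Set.indicator {ω' : ℕ → X | (i : ℕ∞) < tauf p q h ω'} (fun _ => (1 : ℝ)) ω * Zf p q (ω i)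
    with hF
  have hindmeas : ∀ i : ℕ, Measurable
      (Set.indicator {ω' : ℕ → X | (i : ℕ∞) < tauf p q h ω'} (fun _ => (1 : ℝ))) :=
    fun i => measurable_const.indicator (hsetmeas i)
  have hindabs : ∀ (i : ℕ) (ω : ℕ → X),
      |Set.indicator {ω' : ℕ → X | (i : ℕ∞) < tauf p q h ω'} (fun _ => (1 : ℝ)) ω| ≤ 1 := by
    intro i ω
    rw [Set.indicator_apply]
    split <;> simp
  have hFmeas : ∀ i, Measurable (F i) := fun i =>
    (hindmeas i).mul (hZmeas.comp (measurable_pi_apply i))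
  have hFint : ∀ i, Integrable (F i) P := by
    intro i
    refine (integrable_const M).mono' (hFmeas i).aestronglyMeasurable (ae_of_all _ fun ω => ?_)
    simp only [hF]
    simp only [Real.norm_eq_abs, abs_mul]
    calc |Set.indicator {ω' : ℕ → X | (i : ℕ∞) < tauf p q h ω'} (fun _ => (1 : ℝ)) ω|
          * |Zf p q (ω i)| ≤ 1 * |Zf p q (ω i)| :=
        mul_le_mul_of_nonneg_right (hindabs i ω) (abs_nonneg _)
      _ ≤ M := by rw [one_mul]; exact hMbound _
  -- expectation of each coordinate LLR is Δ
  have hEZ : ∀ i : ℕ, ∫ ω, Zf p q (ω i) ∂P = Δ := by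
    intro i
    have hchg : ∫ ω, Zf p q (ω i) ∂P = ∫ x, Zf p q x ∂(P.map (fun ω => ω i)) :=
      (integral_map (measurable_pi_apply i).aemeasurable hZmeas.aestronglyMeasurable).symm
    haveI : IsProbabilityMeasure (P.map (fun ω : ℕ → X => ω i)) :=
      Measure.isProbabilityMeasure_map (measurable_pi_apply i).aemeasurable
    rw [hchg, integral_fintype (Integrable.of_finite), ← hΔeq]
    refine Finset.sum_congr rfl fun x _ => ?_
    have hsingle : (P.map (fun ω : ℕ → X => ω i)) {x} = ENNReal.ofReal (q' x) := by
      rw [hMap i, hpmfapply]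
      rw [Finset.sum_eq_single x (fun y _ hy => by
        rw [Set.indicator_of_notMem (by simpa using hy), mul_zero]) (by simp)]
      rw [Set.indicator_of_mem (Set.mem_singleton x)]
      simp
    rw [Measure.real, hsingle, ENNReal.toReal_ofReal (hq'.1 x), smul_eq_mul]
  -- independence of the stopping indicator and the current step
  have hindep : ∀ i : ℕ, IndepFun
      (Set.indicator {ω' : ℕ → X | (i : ℕ∞) < tauf p q h ω'} (fun _ => (1 : ℝ)))
      (fun ω : ℕ → X => Zf p q (ω i)) P := by
    intro i
    have hdisj : Disjoint (Finset.range i) ({i} : Finset ℕ) := by simp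
    have hbase := hIndep.indepFun_finset (Finset.range i) {i} hdisj
      (fun j => measurable_pi_apply j)
    set φ : ({j // j ∈ Finset.range i} → X) → ℝ := fun v =>
      Set.indicator {v' : {j // j ∈ Finset.range i} → X |
        ∀ m : ℕ, 1 ≤ m → m ≤ i → (∑ j ∈ Finset.range m,
          Zf p q (if hj : j ∈ Finset.range i then v' ⟨j, hj⟩ else x0)) < h}
        (fun _ => (1 : ℝ)) v with hφdef
    set ψ : ({j // j ∈ ({i} : Finset ℕ)} → X) → ℝ := fun v => Zf p q (v ⟨i, Finset.mem_singleton_self i⟩)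
      with hψdef
    have hφm : Measurable φ := measurable_of_countable _
    have hψm : Measurable ψ := measurable_of_countable _
    have hcomp := hbase.comp hφm hψm
    have hcond : ∀ ω : ℕ → X,
        ((fun (j : {j // j ∈ Finset.range i}) => ω j) ∈ {v' : {j // j ∈ Finset.range i} → X |
          ∀ m : ℕ, 1 ≤ m → m ≤ i → (∑ j ∈ Finset.range m,
            Zf p q (if hj : j ∈ Finset.range i then v' ⟨j, hj⟩ else x0)) < h})
        ↔ (i : ℕ∞) < tauf p q h ω := by
      intro ω
      rw [Set.mem_setOf_eq, lt_tauf_iff]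
      refine forall_congr' fun m => forall_congr' fun h1 => forall_congr' fun h2 => ?_
      have hsumeq : (∑ j ∈ Finset.range m,
          Zf p q (if hj : j ∈ Finset.range i then ω j else x0)) = Sf p q m ω := by
        refine Finset.sum_congr rfl fun j hj => ?_
        rw [dif_pos (Finset.mem_range.mpr (lt_of_lt_of_le (Finset.mem_range.mp hj) h2))]
      rw [hsumeq]
    have heq1 : (φ ∘ fun (ω : ℕ → X) (j : (Finset.range i : Finset ℕ)) => ω j)
        = Set.indicator {ω' : ℕ → X | (i : ℕ∞) < tauf p q h ω'} (fun _ => (1 : ℝ)) := by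
      funext ω
      simp only [Function.comp_apply, hφdef]
      rw [Set.indicator_apply, Set.indicator_apply]
      exact if_congr ((hcond ω).trans (by rw [Set.mem_setOf_eq])) rfl rfl
    have heq2 : (ψ ∘ fun (ω : ℕ → X) (j : (({i} : Finset ℕ) : Finset ℕ)) => ω j)
        = fun ω : ℕ → X => Zf p q (ω i) := rfl
    rw [heq1, heq2] at hcomp
    exact hcomp
  -- Wald step: expectation of F i
  have hEF : ∀ i : ℕ, ∫ ω, F i ω ∂P
      = (P {ω' : ℕ → X | (i : ℕ∞) < tauf p q h ω'}).toReal * Δ := by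
    intro i
    have hmul := (hindep i).integral_fun_mul_eq_mul_integral (hindmeas i).aestronglyMeasurable
      ((hZmeas.comp (measurable_pi_apply i)).aestronglyMeasurable)
    simp only [hF]
    rw [hmul, hEZ i]
    congr 1
    rw [integral_indicator_const (1 : ℝ) (hsetmeas i), smul_eq_mul, mul_one, Measure.real]
  -- pointwise bound on the stopped sum
  have hWptwise : ∀ (n : ℕ) (ω : ℕ → X), (∀ i, 0 < q' (ω i)) →
      ∑ i ∈ Finset.range n, F i ω ≤ h + C' := by
    intro n ω hω
    by_cases hcase : (n : ℕ∞) < tauf p q h ω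
    · have hFeq : ∀ i ∈ Finset.range n, F i ω = Zf p q (ω i) := by
        intro i hi
        have hlt : (i : ℕ∞) < tauf p q h ω :=
          lt_trans (by exact_mod_cast Finset.mem_range.mp hi) hcase
        simp only [hF]
        rw [Set.indicator_of_mem, one_mul]
        exact hlt
      rw [Finset.sum_congr rfl hFeq]
      rcases Nat.eq_zero_or_pos n with hn | hn
      · subst hn; simp; linarith
      · have hlt := (lt_tauf_iff.mp hcase) n hn le_rfl
        have : (∑ i ∈ Finset.range n, Zf p q (ω i)) = Sf p q n ω := rfl
        rw [this]; linarith
    · set Sset : Set ℕ := {m | 1 ≤ m ∧ h ≤ Sf p q m ω} with hSset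
      have hSne : Sset.Nonempty := by
        by_contra hc
        rw [Set.not_nonempty_iff_eq_empty] at hc
        have htop : tauf p q h ω = ⊤ := by
          rw [tauf, show {n : ℕ | 1 ≤ n ∧ h ≤ Sf p q n ω} = Sset from rfl, hc]
          simp
        rw [htop] at hcase
        exact hcase (WithTop.coe_lt_top n)
      obtain ⟨t, ht⟩ : ∃ t, sInf Sset = t := ⟨_, rfl⟩
      have htmem : t ∈ Sset := ht ▸ Nat.sInf_mem hSne
      have htau : tauf p q h ω = (t : ℕ∞) := by
        apply le_antisymm
        · exact sInf_le ⟨t, htmem, rfl⟩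
        · refine le_sInf ?_
          rintro _ ⟨m, hm, rfl⟩
          exact_mod_cast ht ▸ Nat.sInf_le hm
      have htn : t ≤ n := by
        rw [htau, not_lt] at hcase
        exact_mod_cast hcase
      have ht1 : 1 ≤ t := htmem.1
      have hFval : ∀ i : ℕ, F i ω = if i < t then Zf p q (ω i) else 0 := by
        intro i
        simp only [hF]
        by_cases hit : i < t
        · rw [if_pos hit, Set.indicator_of_mem, one_mul]
          rw [Set.mem_setOf_eq, htau]
          exact_mod_cast hit
        · rw [if_neg hit, Set.indicator_of_notMem, zero_mul]
          rw [Set.mem_setOf_eq, htau]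
          exact fun hc => hit (by exact_mod_cast hc)
      have hfilter : (Finset.range n).filter (fun i => i < t) = Finset.range t := by
        ext j
        simp only [Finset.mem_filter, Finset.mem_range]
        omega
      have hsum2 : ∑ i ∈ Finset.range n, F i ω = Sf p q t ω := by
        rw [Finset.sum_congr rfl (fun i _ => hFval i), Finset.sum_ite, Finset.sum_const_zero,
          add_zero, hfilter]
        rfl
      rw [hsum2]
      obtain ⟨s, rfl⟩ : ∃ s, t = s + 1 := ⟨t - 1, by omega⟩
      have hsplit : Sf p q (s + 1) ω = Sf p q s ω + Zf p q (ω s) := Finset.sum_range_succ _ _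
      have h1 : Sf p q s ω ≤ h := by
        rcases Nat.eq_zero_or_pos s with h0 | h0
        · subst h0; simpa [Sf] using hh
        · have hns : s ∉ Sset := Nat.notMem_of_lt_sInf (by rw [ht]; omega)
          rw [hSset, Set.mem_setOf_eq] at hns
          push_neg at hns
          exact (hns h0).le
      have h2 : Zf p q (ω s) ≤ C' := hCge _ (hω s)
      rw [hsplit]; linarith
  -- partial-sum inequality
  have hWn : ∀ n : ℕ,
      (∑ i ∈ Finset.range n, (P {ω' : ℕ → X | (i : ℕ∞) < tauf p q h ω'}).toReal) * Δ
        ≤ h + C' := by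
    intro n
    have hWint : Integrable (fun ω => ∑ i ∈ Finset.range n, F i ω) P :=
      integrable_finset_sum _ fun i _ => hFint i
    have hle : ∫ ω, (∑ i ∈ Finset.range n, F i ω) ∂P ≤ h + C' := by
      have hmono : ∫ ω, (∑ i ∈ Finset.range n, F i ω) ∂P ≤ ∫ _, (h + C') ∂P := by
        refine integral_mono_ae hWint (integrable_const _) ?_
        filter_upwards [hae] with ω hω
        exact hWptwise n ω hω
      simpa using hmono
    have heq : ∫ ω, (∑ i ∈ Finset.range n, F i ω) ∂P
        = ∑ i ∈ Finset.range n, (P {ω' : ℕ → X | (i : ℕ∞) < tauf p q h ω'}).toReal * Δ := by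
      rw [integral_finset_sum _ fun i _ => hFint i]
      exact Finset.sum_congr rfl fun i _ => hEF i
    rw [heq, ← Finset.sum_mul] at hle
    exact hle
  -- conclusion
  calc ∫⁻ ω, (T1 p q h ω : ℝ≥0∞) ∂P = ∫⁻ ω, (tauf p q h ω : ℝ≥0∞) ∂P := lintegral_congr_ae hT1
    _ = ∑' k : ℕ, P {ω' : ℕ → X | (k : ℕ∞) < tauf p q h ω'} := by
        have h1 : ∀ ω : ℕ → X, (tauf p q h ω : ℝ≥0∞)
            = ∑' k : ℕ, Set.indicator {ω' : ℕ → X | (k : ℕ∞) < tauf p q h ω'}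
                (fun _ => (1 : ℝ≥0∞)) ω := by
          intro ω
          rw [enat_coe_eq_tsum]
          refine tsum_congr fun k => ?_
          rw [Set.indicator_apply]
          simp only [Set.mem_setOf_eq]
        rw [lintegral_congr h1,
          lintegral_tsum (fun k => (measurable_const.indicator (hsetmeas k)).aemeasurable)]
        refine tsum_congr fun k => ?_
        have := lintegral_indicator_one (μ := P) (hsetmeas k)
        exact this
    _ ≤ ENNReal.ofReal ((h + C') / Δ) := by
        rw [ENNReal.tsum_eq_iSup_sum]
        refine iSup_le fun s => ?_
        obtain ⟨n, hn⟩ : ∃ n, s ⊆ Finset.range n :=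
          ⟨(s.sup id) + 1, fun j hj => Finset.mem_range.mpr
            (Nat.lt_succ_of_le (Finset.le_sup (f := id) hj))⟩
        calc ∑ k ∈ s, P {ω' : ℕ → X | (k : ℕ∞) < tauf p q h ω'}
            ≤ ∑ k ∈ Finset.range n, P {ω' : ℕ → X | (k : ℕ∞) < tauf p q h ω'} :=
              Finset.sum_le_sum_of_subset hn
          _ = ENNReal.ofReal (∑ k ∈ Finset.range n,
                (P {ω' : ℕ → X | (k : ℕ∞) < tauf p q h ω'}).toReal) := by
              rw [ENNReal.ofReal_sum_of_nonneg (fun k _ => ENNReal.toReal_nonneg)]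
              exact Finset.sum_congr rfl fun k _ => (ENNReal.ofReal_toReal (measure_ne_top P _)).symm
          _ ≤ ENNReal.ofReal ((h + C') / Δ) := by
              apply ENNReal.ofReal_le_ofReal
              rw [le_div_iff₀ hΔpos]
              exact hWn n

end QCPD
end
end

section
/- Existence of a hard change point: Let T be a random variable on a probability space taking values in {0,1,2,…} with 0 < E[T] < ∞, and let m ≥ 1 be an integer. Then there exists ν ∈ {0,1,2,…} with P(T > ν) > 0 and P(T > ν + m | T > ν) ≥ 1 − m/E[T]. -/
open MeasureTheory ProbabilityTheory Real
open scoped ENNReal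

noncomputable section

lemma aux_tsum_indicator (t : ℕ) :
    ((t : ℝ≥0∞)) = ∑' n : ℕ, Set.indicator (Set.Iio t) (fun _ => (1:ℝ≥0∞)) n := by
  rw [tsum_eq_sum (s := Finset.range t) (fun n hn => by
    simp [Set.indicator_apply, Set.mem_Iio, Finset.mem_range] at hn ⊢
    omega)]
  simp [Set.indicator_apply, Set.mem_Iio]
  rw [Finset.filter_true_of_mem (fun n hn => Finset.mem_range.mp hn)]
  simp

lemma aux_lintegral_eq {Ω : Type*} [MeasurableSpace Ω] (P : Measure Ω)
    (T : Ω → ℕ) (hmeas : Measurable T) :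
    ∫⁻ ω, (T ω : ℝ≥0∞) ∂P = ∑' n : ℕ, P {ω | n < T ω} := by
  have h1 : ∀ ω, ((T ω : ℝ≥0∞)) = ∑' n : ℕ, Set.indicator {ω' | n < T ω'} (fun _ => (1:ℝ≥0∞)) ω := by
    intro ω
    rw [aux_tsum_indicator (T ω)]
    congr 1
  have hms : ∀ n : ℕ, MeasurableSet {ω | n < T ω} := fun n =>
    hmeas measurableSet_Ioi
  calc ∫⁻ ω, (T ω : ℝ≥0∞) ∂P
      = ∫⁻ ω, ∑' n : ℕ, Set.indicator {ω' | n < T ω'} (fun _ => (1:ℝ≥0∞)) ω ∂P := by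
        exact lintegral_congr h1
    _ = ∑' n : ℕ, ∫⁻ ω, Set.indicator {ω' | n < T ω'} (fun _ => (1:ℝ≥0∞)) ω ∂P :=
        lintegral_tsum (fun n => ((measurable_const.indicator (hms n)).aemeasurable))
    _ = ∑' n : ℕ, P {ω | n < T ω} := by
        congr 1; ext n; exact lintegral_indicator_one (hms n)

/-- **Existence of a hard change point.** If `T` takes values in `{0,1,2,…}` with
`0 < E[T] < ∞` and `m ≥ 1`, then there is a `ν` with `P(T > ν) > 0` and
`P(T > ν + m | T > ν) ≥ 1 − m / E[T]`.  (Since `{T > ν + m} ⊆ {T > ν}`, the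
conditional probability equals `P(T > ν + m) / P(T > ν)`.) -/
theorem exists_hard_change_point
    {Ω : Type*} [MeasurableSpace Ω] (P : Measure Ω) [IsProbabilityMeasure P]
    (T : Ω → ℕ) (hmeas : Measurable T)
    (hint : Integrable (fun ω => (T ω : ℝ)) P)
    (hpos : 0 < ∫ ω, (T ω : ℝ) ∂P)
    (m : ℕ) (hm : 1 ≤ m) :
    ∃ ν : ℕ, 0 < P {ω | ν < T ω} ∧
      ENNReal.ofReal (1 - m / ∫ ω, (T ω : ℝ) ∂P) ≤
        P {ω | ν + m < T ω} / P {ω | ν < T ω} := by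

  set I : ℝ := ∫ ω, (T ω : ℝ) ∂P with hI
  have hms : ∀ n : ℕ, MeasurableSet {ω | n < T ω} := fun n => hmeas measurableSet_Ioi
  -- integral equals toReal of lintegral
  have hIl : I = (∫⁻ ω, (T ω : ℝ≥0∞) ∂P).toReal := by
    rw [hI, integral_eq_lintegral_of_nonneg_ae (Filter.Eventually.of_forall fun ω => by positivity)
      hint.aestronglyMeasurable]
    congr 1
    apply lintegral_congr
    intro ω
    simp [ENNReal.ofReal_natCast]
  have hL : ∫⁻ ω, (T ω : ℝ≥0∞) ∂P = ∑' n : ℕ, P {ω | n < T ω} := aux_lintegral_eq P T hmeas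
  have hLfin : ∫⁻ ω, (T ω : ℝ≥0∞) ∂P ≠ ∞ := by
    have : (∫⁻ ω, ‖(T ω : ℝ)‖₊ ∂P) < ∞ := hint.hasFiniteIntegral
    refine ne_of_lt (lt_of_le_of_lt (le_of_eq ?_) this)
    apply lintegral_congr
    intro ω
    simp
  -- p 0 > 0
  have hp0 : 0 < P {ω | 0 < T ω} := by
    by_contra h
    push_neg at h
    have h0 : P {ω | 0 < T ω} = 0 := le_antisymm h (zero_le)
    have : ∀ᵐ ω ∂P, T ω = 0 := by
      rw [ae_iff]
      convert h0 using 2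
      ext ω; simp [pos_iff_ne_zero]
    have : I = 0 := by
      rw [hI]
      rw [integral_eq_zero_iff_of_nonneg (fun ω => by positivity) hint]
      filter_upwards [this] with ω hω
      simp [hω]
    linarith
  by_cases hIm : I ≤ m
  · refine ⟨0, hp0, ?_⟩
    have : (1 : ℝ) - m / I ≤ 0 := by
      have : (1:ℝ) ≤ m / I := (one_le_div hpos).mpr hIm
      linarith
    rw [ENNReal.ofReal_eq_zero.mpr this]
    exact zero_le
  push_neg at hIm
  -- contradiction branch
  by_contra hcon
  push_neg at hcon
  set c : ℝ := 1 - m / I with hc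
  have hc0 : 0 < c := by
    have : m / I < 1 := (div_lt_one hpos).mpr hIm
    simp [hc]; linarith
  -- key: P {ν+m < T} ≤ ofReal c * P {ν < T}, strict for ν = 0
  have hsub : ∀ ν : ℕ, {ω | ν + m < T ω} ⊆ {ω | ν < T ω} := by
    intro ν ω hω; simp at hω ⊢; omega
  have key : ∀ ν : ℕ, P {ω | ν + m < T ω} ≤ ENNReal.ofReal c * P {ω | ν < T ω} := by
    intro ν
    by_cases hν : P {ω | ν < T ω} = 0
    · have : P {ω | ν + m < T ω} = 0 := le_antisymm ((measure_mono (hsub ν)).trans hν.le) (zero_le)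
      simp [this]
    · have hlt := hcon ν (pos_iff_ne_zero.mpr hν)
      have := (ENNReal.div_lt_iff (Or.inl hν) (Or.inl (measure_ne_top P _))).mp hlt
      exact this.le
  have key0 : P {ω | 0 + m < T ω} < ENNReal.ofReal c * P {ω | 0 < T ω} := by
    have hlt := hcon 0 hp0
    exact (ENNReal.div_lt_iff (Or.inl hp0.ne') (Or.inl (measure_ne_top P _))).mp hlt
  -- move to reals
  set p : ℕ → ℝ := fun n => (P {ω | n < T ω}).toReal with hp
  have hpne : ∀ n, P {ω | n < T ω} ≠ ∞ := fun n => measure_ne_top P _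
  have hkeyR : ∀ ν, p (ν + m) ≤ c * p ν := by
    intro ν
    have := ENNReal.toReal_mono (by
      exact ENNReal.mul_ne_top ENNReal.ofReal_ne_top (hpne ν)) (key ν)
    rwa [ENNReal.toReal_mul, ENNReal.toReal_ofReal hc0.le] at this
  have hkey0R : p (0 + m) < c * p 0 := by
    have := ENNReal.toReal_strict_mono (by
      exact ENNReal.mul_ne_top ENNReal.ofReal_ne_top (hpne 0)) key0
    rwa [ENNReal.toReal_mul, ENNReal.toReal_ofReal hc0.le] at this
  -- summability and tsum
  have hsum : Summable p := by
    apply ENNReal.summable_toReal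
    rw [← hL]; exact hLfin
  have htsum : ∑' n, p n = I := by
    rw [hIl, hL, ENNReal.tsum_toReal_eq hpne]
  have hp1 : ∀ n, p n ≤ 1 := fun n => by
    rw [hp]
    exact ENNReal.toReal_le_of_le_ofReal zero_le_one (by simpa using prob_le_one)
  have hpnn : ∀ n, 0 ≤ p n := fun n => ENNReal.toReal_nonneg
  -- split the sum
  have hsplit : (∑ k ∈ Finset.range m, p k) + ∑' n, p (n + m) = ∑' n, p n :=
    Summable.sum_add_tsum_nat_add m hsum
  have htail : ∑' n, p (n + m) < ∑' n, c * p n := by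
    apply Summable.tsum_lt_tsum (i := 0) hkeyR hkey0R ((summable_nat_add_iff m).mpr hsum)
      (hsum.mul_left c)
  have hctsum : ∑' n, c * p n = c * I := by rw [tsum_mul_left, htsum]
  have hhead : (∑ k ∈ Finset.range m, p k) ≤ m := by
    calc (∑ k ∈ Finset.range m, p k) ≤ ∑ k ∈ Finset.range m, 1 :=
      Finset.sum_le_sum (fun k _ => hp1 k)
    _ = m := by simp
  have : I < m + c * I := by
    calc I = (∑ k ∈ Finset.range m, p k) + ∑' n, p (n + m) := by rw [hsplit, htsum]
    _ < (∑ k ∈ Finset.range m, p k) + c * I := by rw [← hctsum]; linarith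
    _ ≤ m + c * I := by linarith
  have hcI : c * I = I - m := by
    rw [hc]; field_simp
  linarith [this, hcI]
end
end

section
/- Asymptotic lower bound on the worst-case detection delay (classical form of Lai's theorem): Let I > 0 and ε ∈ (0,1), and suppose that lim_{n→∞} sup_{ν ≥ 0} sup_{x^ν : P_∞(X^ν = x^ν) > 0} P_ν( max_{1 ≤ t ≤ n} λ^{(ν)}_{ν+t} ≥ (1+ε)·I·n | X^ν = x^ν ) = 0. Then for every δ ∈ (0,1) there exists K₀ such that every stopping time T with respect to the canonical filtration, taking values in {1,2,…}, with K₀ ≤ E_∞[T] < ∞, satisfies sup_{ν ≥ 0 : P_∞(T > ν) > 0} E_ν[T − ν | T > ν] ≥ (1 − ε)(1 − δ) · (log E_∞[T]) / I, where the conditional expectations are taken in the extended reals. -/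
open MeasureTheory ProbabilityTheory Real Filter
open scoped ENNReal NNReal

set_option linter.unusedSectionVars false

noncomputable section

namespace QCPD

variable {X : Type*}

/-- The canonical filtration `F_n = σ(X_1, …, X_n)` on `Ω = ℕ → X` (the `i`-th
coordinate represents `X_{i+1}`). -/
def filt (X : Type*) [MeasurableSpace X] (n : ℕ) : MeasurableSpace (ℕ → X) :=
  MeasurableSpace.comap (fun ω (i : Fin n) => ω i) inferInstance

/-- The cylinder event `{X^n = x^n}` determined by the first `n` outcomes. -/
def cylEvent {X : Type*} {n : ℕ} (xs : Fin n → X) : Set (ℕ → X) :=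
  {ω | ∀ i : Fin n, ω i = xs i}

/-- The cylinder event `{X^n = X^n(ω)}` of sequences agreeing with `ω` on the
first `n` outcomes. -/
def cylOf {X : Type*} (n : ℕ) (ω : ℕ → X) : Set (ℕ → X) := {ω' | ∀ i < n, ω' i = ω i}

/-- The log-likelihood ratio
`λ^{(ν)}_n(ω) = log (P_ν(X^n = X^n(ω)) / P_∞(X^n = X^n(ω)))`, valued in the
extended reals. -/
def lam [MeasurableSpace X] (Pinf : Measure (ℕ → X)) (Pc : ℕ → Measure (ℕ → X)) (ν n : ℕ)
    (ω : ℕ → X) : EReal :=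
  ENNReal.log (Pc ν (cylOf n ω) / Pinf (cylOf n ω))

section Helpers

/-- A set is determined by the first `m` coordinates. -/
def Det (m : ℕ) (A : Set (ℕ → X)) : Prop :=
  ∀ ω ω' : ℕ → X, (∀ i < m, ω i = ω' i) → ω ∈ A → ω' ∈ A

lemma Det.mono {m m' : ℕ} {A : Set (ℕ → X)} (h : Det m A) (hm : m ≤ m') : Det m' A :=
  fun ω ω' hag => h ω ω' (fun i hi => hag i (lt_of_lt_of_le hi hm))

lemma Det.compl {m : ℕ} {A : Set (ℕ → X)} (h : Det m A) : Det m Aᶜ := by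
  intro ω ω' hag hω hmem
  exact hω (h ω' ω (fun i hi => (hag i hi).symm) hmem)

lemma Det.inter {m : ℕ} {A B : Set (ℕ → X)} (hA : Det m A) (hB : Det m B) :
    Det m (A ∩ B) := fun ω ω' hag hω => ⟨hA ω ω' hag hω.1, hB ω ω' hag hω.2⟩

lemma Det.diff {m : ℕ} {A B : Set (ℕ → X)} (hA : Det m A) (hB : Det m B) :
    Det m (A \ B) := hA.inter hB.compl

lemma det_cylEvent {m : ℕ} (xs : Fin m → X) : Det m (cylEvent xs) := by
  intro ω ω' hag hω i
  rw [← hag i i.isLt]; exact hω i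

lemma det_of_filt [MeasurableSpace X] {m : ℕ} {A : Set (ℕ → X)}
    (h : MeasurableSet[filt X m] A) : Det m A := by
  rw [filt, MeasurableSpace.measurableSet_comap] at h
  obtain ⟨S, -, rfl⟩ := h
  intro ω ω' hag hω
  have : (fun i : Fin m => ω' i) = fun i : Fin m => ω i := by
    funext i; exact (hag i i.isLt).symm
  simpa [Set.mem_preimage, this] using hω

variable [Fintype X] [Nonempty X] [MeasurableSpace X] [DiscreteMeasurableSpace X]

lemma Det.measurableSet {m : ℕ} {A : Set (ℕ → X)} (h : Det m A) : MeasurableSet A := by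
  have hproj : Measurable (fun ω (i : Fin m) => ω i : (ℕ → X) → (Fin m → X)) :=
    measurable_pi_lambda _ (fun i => measurable_pi_apply _)
  have : A = (fun ω (i : Fin m) => ω i) ⁻¹' ((fun ω (i : Fin m) => ω i) '' A) := by
    apply Set.Subset.antisymm (Set.subset_preimage_image _ _)
    rintro ω ⟨ω₀, hω₀, heq⟩
    refine h ω₀ ω (fun i hi => ?_) hω₀
    exact congrFun heq ⟨i, hi⟩
  rw [this]
  exact hproj (MeasurableSet.of_discrete)

lemma measurableSet_cylEvent {m : ℕ} (xs : Fin m → X) : MeasurableSet (cylEvent xs) :=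
  (det_cylEvent xs).measurableSet

lemma cylEvent_disjoint {m : ℕ} {xs ys : Fin m → X} (h : xs ≠ ys) :
    Disjoint (cylEvent xs) (cylEvent ys) := by
  rw [Set.disjoint_left]
  intro ω hx hy
  exact h (funext fun i => (hx i).symm.trans (hy i))

lemma cylEvent_nonempty {m : ℕ} (xs : Fin m → X) : (cylEvent xs).Nonempty := by
  classical
  refine ⟨fun i => if h : i < m then xs ⟨i, h⟩ else Classical.arbitrary X, fun i => ?_⟩
  simp [i.isLt]

lemma cylOf_eq_cylEvent {m : ℕ} {xs : Fin m → X} {ω : ℕ → X} (hω : ω ∈ cylEvent xs) :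
    cylOf m ω = cylEvent xs := by
  ext ω'
  constructor
  · intro h i; rw [← hω i]; exact h i i.isLt
  · intro h i hi; rw [(h ⟨i, hi⟩ : ω' i = xs ⟨i, hi⟩), hω ⟨i, hi⟩]

lemma mem_cylEvent_self (m : ℕ) (ω : ℕ → X) : ω ∈ cylEvent (fun i : Fin m => ω i) :=
  fun _ => rfl

/-- The basic decomposition of a measure of `B ∩ A` over cylinders of length `m`,
for `A` determined by the first `m` coordinates. -/
lemma meas_decomp (μ : Measure (ℕ → X)) {B A : Set (ℕ → X)} (hB : MeasurableSet B)
    {m : ℕ} (hA : Det m A) :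
    μ (B ∩ A) = ∑ xs : Fin m → X, μ (B ∩ (cylEvent xs ∩ A)) := by
  classical
  have hcover : B ∩ A = ⋃ xs ∈ (Finset.univ : Finset (Fin m → X)),
      B ∩ (cylEvent xs ∩ A) := by
    ext ω
    simp only [Set.mem_iUnion, Finset.mem_univ, Set.mem_inter_iff, exists_prop, true_and]
    constructor
    · rintro ⟨hB', hA'⟩
      exact ⟨fun i : Fin m => ω i, hB', mem_cylEvent_self m ω, hA'⟩
    · rintro ⟨xs, hB', -, hA'⟩; exact ⟨hB', hA'⟩
  rw [hcover, measure_biUnion_finset]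
  · intro xs _ ys _ hxy
    exact (cylEvent_disjoint hxy).mono (Set.inter_subset_right.trans Set.inter_subset_left)
      (Set.inter_subset_right.trans Set.inter_subset_left)
  · intro xs _
    exact hB.inter ((measurableSet_cylEvent xs).inter hA.measurableSet)

/-- For `A` determined by the first `m` coordinates, each cylinder is contained
in `A` or disjoint from it. -/
lemma cyl_inter_eq {A : Set (ℕ → X)} {m : ℕ} (hA : Det m A) (xs : Fin m → X) :
    cylEvent xs ∩ A = ∅ ∨ cylEvent xs ∩ A = cylEvent xs := by
  rcases Set.eq_empty_or_nonempty (cylEvent xs ∩ A) with h | ⟨ω₀, hω₀⟩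
  · exact Or.inl h
  · refine Or.inr (Set.Subset.antisymm Set.inter_subset_left (fun ω hω => ⟨hω, ?_⟩))
    refine hA ω₀ ω (fun i hi => ?_) hω₀.2
    rw [(hω₀.1 ⟨i, hi⟩ : ω₀ i = xs ⟨i, hi⟩), (hω ⟨i, hi⟩ : ω i = xs ⟨i, hi⟩)]


section Measures

variable (Pinf : Measure (ℕ → X)) [IsProbabilityMeasure Pinf]
  (Pc : ℕ → Measure (ℕ → X))

/-- Measures agreeing on all cylinders of length `m` agree on `m`-determined sets. -/
lemma agree_det {ν : ℕ} (hagree : ∀ xs : Fin ν → X, Pc ν (cylEvent xs) = Pinf (cylEvent xs))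
    {A : Set (ℕ → X)} (hA : Det ν A) : Pc ν A = Pinf A := by
  have h1 := meas_decomp (Pc ν) MeasurableSet.univ hA
  have h2 := meas_decomp Pinf MeasurableSet.univ hA
  rw [Set.univ_inter] at h1 h2
  rw [h1, h2]
  refine Finset.sum_congr rfl (fun xs _ => ?_)
  rcases cyl_inter_eq hA xs with h | h <;> rw [Set.univ_inter, h]
  · simp
  · exact hagree xs

/-- Change of measure: if on every point of an `m`-determined set `A` the cylinder
measures compare up to a factor `K`, then so do the measures of `A`. -/
lemma change_of_measure {ν m : ℕ} {A : Set (ℕ → X)} (hA : Det m A) (K : ℝ≥0∞)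
    (h : ∀ ω ∈ A, Pc ν (cylOf m ω) ≤ K * Pinf (cylOf m ω)) :
    Pc ν A ≤ K * Pinf A := by
  have h1 := meas_decomp (Pc ν) MeasurableSet.univ hA
  have h2 := meas_decomp Pinf MeasurableSet.univ hA
  rw [Set.univ_inter] at h1 h2
  simp only [Set.univ_inter] at h1 h2
  rw [h1, h2, Finset.mul_sum]
  refine Finset.sum_le_sum (fun xs _ => ?_)
  rcases cyl_inter_eq hA xs with hc | hc <;> rw [hc]
  · simp
  · obtain ⟨ω₀, hω₀⟩ := cylEvent_nonempty xs
    have hωA : ω₀ ∈ A := by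
      have : ω₀ ∈ cylEvent xs ∩ A := by rw [hc]; exact hω₀
      exact this.2
    have := h ω₀ hωA
    rwa [cylOf_eq_cylEvent hω₀] at this

/-- Conditional bound: if `P_ν(B ∩ C)/P_ν(C) ≤ a` for every positive cylinder `C`
of length `ν`, then `P_ν(B ∩ A) ≤ a * P_ν A` for every `ν`-determined `A`. -/
lemma cond_bound {ν : ℕ} (hagree : ∀ xs : Fin ν → X, Pc ν (cylEvent xs) = Pinf (cylEvent xs))
    {B A : Set (ℕ → X)} (hB : MeasurableSet B) (hA : Det ν A) (a : ℝ≥0∞)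
    (h : ∀ xs : Fin ν → X, 0 < Pinf (cylEvent xs) →
      Pc ν (B ∩ cylEvent xs) / Pc ν (cylEvent xs) ≤ a) :
    Pc ν (B ∩ A) ≤ a * Pc ν A := by
  have h1 := meas_decomp (Pc ν) hB hA
  have h2 := meas_decomp (Pc ν) MeasurableSet.univ hA
  rw [Set.univ_inter] at h2
  simp only [Set.univ_inter] at h2
  rw [h1, h2, Finset.mul_sum]
  refine Finset.sum_le_sum (fun xs _ => ?_)
  rcases cyl_inter_eq hA xs with hc | hc <;> rw [hc]
  · simp
  · rcases eq_or_lt_of_le (zero_le : (0:ℝ≥0∞) ≤ Pinf (cylEvent xs)) with hz | hz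
    · have hz' : Pc ν (cylEvent xs) = 0 := by rw [hagree xs, ← hz]
      calc Pc ν (B ∩ cylEvent xs) ≤ Pc ν (cylEvent xs) :=
            measure_mono Set.inter_subset_right
        _ = 0 := hz'
        _ ≤ a * Pc ν (cylEvent xs) := zero_le
    · have hne : Pc ν (cylEvent xs) ≠ 0 := by rw [hagree xs]; exact (ne_of_gt hz)
      have htop : Pc ν (cylEvent xs) ≠ ⊤ := by
        rw [hagree xs]; exact measure_ne_top _ _
      have := h xs hz
      rwa [ENNReal.div_le_iff hne htop] at this

end Measures

/-- `∫ f dμ = ∑_j μ{f > j}` for `ℕ`-valued `f`. -/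
lemma lintegral_nat_eq_tsum {α : Type*} [MeasurableSpace α] (μ : Measure α) (f : α → ℕ)
    (hf : ∀ j : ℕ, MeasurableSet {ω | j < f ω}) :
    ∫⁻ ω, (f ω : ℝ≥0∞) ∂μ = ∑' j : ℕ, μ {ω | j < f ω} := by
  have hpt : ∀ ω, (f ω : ℝ≥0∞) = ∑' j : ℕ, Set.indicator {ω | j < f ω} (fun _ => 1) ω := by
    intro ω
    have : ∀ j : ℕ, Set.indicator {ω' | j < f ω'} (fun _ => (1 : ℝ≥0∞)) ω
        = if j < f ω then 1 else 0 := by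
      intro j; by_cases h : j < f ω <;> simp [Set.indicator, h]
    rw [tsum_congr this, tsum_eq_sum (s := Finset.range (f ω))
      (fun j hj => by
        have : ¬ j < f ω := by
          have := Finset.mem_range.not.mp hj; omega
        simp [this])]
    rw [Finset.sum_ite_of_true (fun j hj => Finset.mem_range.mp hj)]
    simp
  calc ∫⁻ ω, (f ω : ℝ≥0∞) ∂μ
      = ∫⁻ ω, ∑' j : ℕ, Set.indicator {ω' | j < f ω'} (fun _ => 1) ω ∂μ := by
        exact lintegral_congr hpt
    _ = ∑' j : ℕ, ∫⁻ ω, Set.indicator {ω' | j < f ω'} (fun _ => 1) ω ∂μ :=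
        lintegral_tsum (fun j => ((measurable_const).indicator (hf j)).aemeasurable)
    _ = ∑' j : ℕ, μ {ω | j < f ω} := by
        refine tsum_congr (fun j => ?_)
        exact lintegral_indicator_one (hf j)


/-- Geometric tail bound: if at every multiple of `n` the chance of stopping within the
next `n` steps, conditionally on not having stopped, is at least `p`, then
`E[f] ≤ n / p`. -/
lemma expectation_bound {α : Type*} [MeasurableSpace α] (μ : Measure α)
    [IsProbabilityMeasure μ]
    (f : α → ℕ) (hf : ∀ j : ℕ, MeasurableSet {ω | j < f ω})
    (n : ℕ) (hn : 0 < n) (p : ℝ≥0∞) (hp : p ≤ 1)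
    (h : ∀ k : ℕ, p * μ {ω | k * n < f ω} ≤ μ {ω | k * n < f ω ∧ f ω ≤ k * n + n}) :
    ∫⁻ ω, (f ω : ℝ≥0∞) ∂μ ≤ n / p := by
  haveI : NeZero n := ⟨hn.ne'⟩
  have hmid : ∀ j : ℕ, MeasurableSet {ω | j < f ω ∧ f ω ≤ j + n} := by
    intro j
    have : {ω | j < f ω ∧ f ω ≤ j + n} = {ω | j < f ω} ∩ {ω | j + n < f ω}ᶜ := by
      ext ω; simp only [Set.mem_inter_iff, Set.mem_setOf_eq, Set.mem_compl_iff, not_lt]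
    rw [this]; exact (hf j).inter (hf (j + n)).compl
  have hdecomp : ∀ j : ℕ, μ {ω | j < f ω}
      = μ {ω | j + n < f ω} + μ {ω | j < f ω ∧ f ω ≤ j + n} := by
    intro j
    have hu : {ω | j < f ω} = {ω | j + n < f ω} ∪ {ω | j < f ω ∧ f ω ≤ j + n} := by
      ext ω; simp only [Set.mem_union, Set.mem_setOf_eq]; omega
    have hdis : Disjoint {ω | j + n < f ω} {ω | j < f ω ∧ f ω ≤ j + n} := by
      rw [Set.disjoint_left]; intro ω h1 h2; simp only [Set.mem_setOf_eq] at h1 h2; omega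
    rw [hu, measure_union hdis (hmid j)]
  have hstep : ∀ k : ℕ, μ {ω | (k + 1) * n < f ω} ≤ (1 - p) * μ {ω | k * n < f ω} := by
    intro k
    have hd := hdecomp (k * n)
    have hh := h k
    have hle : μ {ω | k * n + n < f ω} + p * μ {ω | k * n < f ω} ≤ μ {ω | k * n < f ω} := by
      calc μ {ω | k * n + n < f ω} + p * μ {ω | k * n < f ω}
          ≤ μ {ω | k * n + n < f ω} + μ {ω | k * n < f ω ∧ f ω ≤ k * n + n} :=
            add_le_add le_rfl hh
        _ = μ {ω | k * n < f ω} := hd.symm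
    have := ENNReal.le_sub_of_add_le_right (by exact ENNReal.mul_ne_top (lt_of_le_of_lt hp ENNReal.one_lt_top).ne (measure_ne_top _ _)) hle
    have hsm : (1 - p) * μ {ω | k * n < f ω}
        = 1 * μ {ω | k * n < f ω} - p * μ {ω | k * n < f ω} :=
      ENNReal.sub_mul (fun _ _ => measure_ne_top _ _)
    rw [hsm, one_mul]
    have hkn : (k + 1) * n = k * n + n := by ring
    rw [hkn]
    exact this
  have hiter : ∀ k : ℕ, μ {ω | k * n < f ω} ≤ (1 - p) ^ k := by
    intro k
    induction k with
    | zero => simpa using prob_le_one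
    | succ k ih =>
      calc μ {ω | (k + 1) * n < f ω} ≤ (1 - p) * μ {ω | k * n < f ω} := hstep k
        _ ≤ (1 - p) * (1 - p) ^ k := mul_le_mul_right ih _
        _ = (1 - p) ^ (k + 1) := by ring
  rw [lintegral_nat_eq_tsum μ f hf]
  have e := (Nat.divModEquiv n).symm
  calc ∑' j : ℕ, μ {ω | j < f ω}
      = ∑' q : ℕ × Fin n, μ {ω | (Nat.divModEquiv n).symm q < f ω} :=
        (Equiv.tsum_eq (Nat.divModEquiv n).symm (fun j => μ {ω | j < f ω})).symm
    _ ≤ ∑' q : ℕ × Fin n, μ {ω | q.1 * n < f ω} := by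
        refine ENNReal.tsum_le_tsum (fun q => measure_mono (fun ω hω => ?_))
        simp only [Nat.divModEquiv_symm_apply, Set.mem_setOf_eq] at hω ⊢
        omega
    _ = ∑' k : ℕ, ∑' i : Fin n, μ {ω | k * n < f ω} := ENNReal.tsum_prod'
    _ = ∑' k : ℕ, (n : ℝ≥0∞) * μ {ω | k * n < f ω} := by
        refine tsum_congr (fun k => ?_)
        rw [tsum_fintype]
        simp [Finset.sum_const, nsmul_eq_mul]
    _ = (n : ℝ≥0∞) * ∑' k : ℕ, μ {ω | k * n < f ω} := ENNReal.tsum_mul_left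
    _ ≤ (n : ℝ≥0∞) * ∑' k : ℕ, (1 - p) ^ k :=
        mul_le_mul_right (ENNReal.tsum_le_tsum hiter) _
    _ = (n : ℝ≥0∞) * (1 - (1 - p))⁻¹ := by rw [ENNReal.tsum_geometric]
    _ = (n : ℝ≥0∞) / p := by
        rw [ENNReal.sub_sub_cancel ENNReal.one_ne_top hp, div_eq_mul_inv]



end Helpers

set_option maxHeartbeats 1600000 in
/-- **Asymptotic lower bound on the worst-case detection delay (classical form of
Lai's theorem).**  Under the likelihood-growth condition, every stopping time `T`
with `K₀ ≤ E_∞[T] < ∞` satisfies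
`sup_ν E_ν[T − ν | T > ν] ≥ (1−ε)(1−δ)·log E_∞[T]/I`. -/
theorem lai_delay_lower_bound
    [Fintype X] [Nonempty X] [MeasurableSpace X] [DiscreteMeasurableSpace X]
    (Pinf : Measure (ℕ → X)) [IsProbabilityMeasure Pinf]
    (Pc : ℕ → Measure (ℕ → X)) (hPcprob : ∀ ν, IsProbabilityMeasure (Pc ν))
    (hagree : ∀ (ν : ℕ) (xs : Fin ν → X), Pc ν (cylEvent xs) = Pinf (cylEvent xs))
    (habs : ∀ (ν n : ℕ) (xs : Fin n → X),
      0 < Pc ν (cylEvent xs) → 0 < Pinf (cylEvent xs))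
    (I : ℝ) (hI : 0 < I) (ε : ℝ) (hε0 : 0 < ε) (hε1 : ε < 1)
    (hcond : Tendsto
      (fun n : ℕ => ⨆ ν : ℕ, ⨆ xs : {xs : Fin ν → X // 0 < Pinf (cylEvent xs)},
        Pc ν ({ω | ∃ t : ℕ, 1 ≤ t ∧ t ≤ n ∧
            (((1 + ε) * I * n : ℝ) : EReal) ≤ lam Pinf Pc ν (ν + t) ω} ∩
          cylEvent xs.1) / Pc ν (cylEvent xs.1))
      atTop (nhds 0)) :
    ∀ δ : ℝ, 0 < δ → δ < 1 → ∃ K₀ : ℝ,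
      ∀ T : (ℕ → X) → ℕ, (∀ ω, 1 ≤ T ω) →
        (∀ n : ℕ, MeasurableSet[filt X n] {ω | T ω ≤ n}) →
        ENNReal.ofReal K₀ ≤ ∫⁻ ω, (T ω : ℝ≥0∞) ∂Pinf →
        ∫⁻ ω, (T ω : ℝ≥0∞) ∂Pinf < ⊤ →
        ENNReal.ofReal
            ((1 - ε) * (1 - δ) *
              Real.log (∫⁻ ω, (T ω : ℝ≥0∞) ∂Pinf).toReal / I) ≤
          ⨆ ν : ℕ, ⨆ _ : 0 < Pinf {ω | ν < T ω},
            (∫⁻ ω in {ω | ν < T ω}, ((T ω - ν : ℕ) : ℝ≥0∞) ∂(Pc ν)) /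
              Pc ν {ω | ν < T ω} := by
  intro δ hδ0 hδ1
  have hI' : I ≠ 0 := hI.ne'
  set c : ℝ := (1 + ε) * I with hc_def
  have hc_pos : 0 < c := by positivity
  set κ : ℝ := (1 - ε) * (1 - δ / 2) / I with hκ_def
  have hκpos : 0 < κ := by
    apply div_pos (mul_pos (by linarith) (by linarith)) hI
  set θ : ℝ := c * κ with hθ_def
  have hθ0 : 0 < θ := mul_pos hc_pos hκpos
  have hθval : θ = (1 + ε) * (1 - ε) * (1 - δ / 2) := by
    rw [hθ_def, hc_def, hκ_def, mul_div_assoc', div_eq_iff hI']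
    ring
  have hθ1 : θ < 1 := by
    rw [hθval]
    have he2 : (0:ℝ) < 1 - ε ^ 2 := by nlinarith
    have hfac : (1 + ε) * (1 - ε) = 1 - ε ^ 2 := by ring
    rw [hfac]
    nlinarith
  -- extract `N₀` from the likelihood condition
  have ha_pos : (0 : ℝ≥0∞) < ENNReal.ofReal (δ / 4) := ENNReal.ofReal_pos.mpr (by linarith)
  obtain ⟨N₀, hN₀⟩ := eventually_atTop.mp (hcond.eventually_lt_const ha_pos)
  -- the eventual conditions on `γ`
  have hev : ∀ᶠ γ : ℝ in atTop, ((N₀ : ℝ) + 1 ≤ κ * Real.log γ ∧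
      (κ * Real.log γ + 1) * ((4 / δ) * Real.exp c) * γ ^ θ < γ) ∧ 1 ≤ γ := by
    refine (Filter.Eventually.and ?_ ?_).and (eventually_ge_atTop 1)
    · exact (Real.tendsto_log_atTop.const_mul_atTop hκpos).eventually_ge_atTop _
    · have hlo : (fun γ : ℝ => κ * Real.log γ + 1) =o[atTop] fun γ => γ ^ (1 - θ) := by
        refine Asymptotics.IsLittleO.add ?_ ?_
        · exact (isLittleO_log_rpow_atTop (by linarith)).const_mul_left κ
        · refine Asymptotics.isLittleO_const_left.mpr (Or.inr ?_)
          exact tendsto_abs_atTop_atTop.comp (tendsto_rpow_atTop (by linarith))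
      have hD : (0 : ℝ) < (4 / δ) * Real.exp c := by positivity
      have hsmall := hlo.def (show (0:ℝ) < (((4 / δ) * Real.exp c) * 2)⁻¹ by positivity)
      filter_upwards [hsmall, eventually_ge_atTop (1 : ℝ)] with γ hγ hγ1
      have hγ0 : (0 : ℝ) < γ := by linarith
      have hlog0 : 0 ≤ Real.log γ := Real.log_nonneg hγ1
      have hrpos : (0 : ℝ) < γ ^ (1 - θ) := Real.rpow_pos_of_pos hγ0 _
      rw [Real.norm_eq_abs, Real.norm_eq_abs, abs_of_nonneg (by positivity),
        abs_of_nonneg hrpos.le] at hγ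
      have h2 : (κ * Real.log γ + 1) * ((4 / δ) * Real.exp c) < γ ^ (1 - θ) := by
        have hstep : (κ * Real.log γ + 1) * ((4 / δ) * Real.exp c) ≤ γ ^ (1 - θ) / 2 := by
          rw [div_eq_mul_inv]
          calc (κ * Real.log γ + 1) * ((4 / δ) * Real.exp c)
              ≤ ((((4 / δ) * Real.exp c) * 2)⁻¹ * γ ^ (1 - θ)) * ((4 / δ) * Real.exp c) := by
                gcongr
            _ = γ ^ (1 - θ) * 2⁻¹ := by field_simp
        linarith
      calc (κ * Real.log γ + 1) * ((4 / δ) * Real.exp c) * γ ^ θ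
          < γ ^ (1 - θ) * γ ^ θ := by
            have hθγ : (0:ℝ) < γ ^ θ := Real.rpow_pos_of_pos hγ0 _
            exact mul_lt_mul_of_pos_right h2 hθγ
        _ = γ := by
            rw [← Real.rpow_add hγ0]; simp
  obtain ⟨K₀, hK₀⟩ := eventually_atTop.mp hev
  refine ⟨K₀, ?_⟩
  intro T hT1 hTfiltmeas hTK hTfin
  set ET := ∫⁻ ω, (T ω : ℝ≥0∞) ∂Pinf with hET_def
  set γ : ℝ := ET.toReal with hγ_def
  have hγK : K₀ ≤ γ := (ENNReal.ofReal_le_iff_le_toReal hTfin.ne).mp hTK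
  obtain ⟨⟨hQ1, hQ2⟩, hγ1⟩ := hK₀ γ hγK
  have hγ0 : (0 : ℝ) < γ := by linarith
  have hlogγ0 : 0 ≤ Real.log γ := Real.log_nonneg hγ1
  have hETγ : ET = ENNReal.ofReal γ := (ENNReal.ofReal_toReal hTfin.ne).symm
  -- the window length `n`
  set n : ℕ := ⌈κ * Real.log γ⌉₊ with hn_def
  have hκlog_le_n : κ * Real.log γ ≤ (n : ℝ) := Nat.le_ceil _
  have hn_le : (n : ℝ) ≤ κ * Real.log γ + 1 := (Nat.ceil_lt_add_one (by positivity)).le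
  have hN₀n : N₀ ≤ n := by
    have h1 : ((N₀ : ℝ) + 1) ≤ (n : ℝ) := le_trans hQ1 hκlog_le_n
    exact_mod_cast le_trans (by linarith : (N₀:ℝ) ≤ (N₀:ℝ) + 1) h1
  have hn1 : 1 ≤ n := by
    have h1 : (1 : ℝ) ≤ (n : ℝ) := le_trans (by norm_num) (le_trans hQ1 hκlog_le_n)
    exact_mod_cast h1
  have hn0 : 0 < n := hn1
  -- measurability facts about `T`
  have hTle : ∀ j : ℕ, MeasurableSet {ω : ℕ → X | T ω ≤ j} :=
    fun j => (det_of_filt (hTfiltmeas j)).measurableSet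
  have hTgt : ∀ j : ℕ, MeasurableSet {ω : ℕ → X | j < T ω} := by
    intro j
    have : {ω : ℕ → X | j < T ω} = {ω | T ω ≤ j}ᶜ := by
      ext ω; simp [not_le]
    rw [this]; exact (hTle j).compl
  have hDetgt : ∀ j : ℕ, Det j {ω : ℕ → X | j < T ω} := by
    intro j
    have : {ω : ℕ → X | j < T ω} = {ω | T ω ≤ j}ᶜ := by
      ext ω; simp [not_le]
    rw [this]; exact (det_of_filt (hTfiltmeas j)).compl
  -- the probability level `p`
  set p : ℝ≥0∞ := ENNReal.ofReal (δ / 4 * Real.exp (-(c * n))) with hp_def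
  have hp1 : p ≤ 1 := by
    rw [hp_def]
    refine ENNReal.ofReal_le_one.mpr ?_
    have h1 : Real.exp (-(c * n)) ≤ 1 := Real.exp_le_one_iff.mpr
      (neg_nonpos.mpr (by positivity))
    nlinarith [Real.exp_pos (-(c * n))]
  -- pigeonhole: find a good `ν = k * n`
  have hpigeon : ∃ k : ℕ,
      Pinf {ω | k * n < T ω ∧ T ω ≤ k * n + n} < p * Pinf {ω | k * n < T ω} := by
    by_contra hcon
    push_neg at hcon
    have hboundET := expectation_bound Pinf T hTgt n hn0 p hp1 hcon
    -- show `n / p < ET`, contradiction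
    have hpr : (0 : ℝ) < δ / 4 * Real.exp (-(c * n)) := by positivity
    have hdiv : (n : ℝ≥0∞) / p = ENNReal.ofReal ((n : ℝ) / (δ / 4 * Real.exp (-(c * n)))) := by
      rw [ENNReal.ofReal_div_of_pos hpr, hp_def, ENNReal.ofReal_natCast]
    have hreal : (n : ℝ) / (δ / 4 * Real.exp (-(c * n))) < γ := by
      have hrw : (n : ℝ) / (δ / 4 * Real.exp (-(c * n)))
          = (n : ℝ) * ((4 / δ) * Real.exp (c * n)) := by
        rw [Real.exp_neg]
        field_simp
      rw [hrw]
      have hexp : Real.exp (c * n) ≤ Real.exp c * γ ^ θ := by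
        have h1 : c * n ≤ Real.log γ * θ + c := by
          have := mul_le_mul_of_nonneg_left hn_le hc_pos.le
          calc c * n ≤ c * (κ * Real.log γ + 1) := this
            _ = Real.log γ * θ + c := by rw [hθ_def]; ring
        calc Real.exp (c * n) ≤ Real.exp (Real.log γ * θ + c) := Real.exp_le_exp.mpr h1
          _ = Real.exp c * γ ^ θ := by
            rw [Real.exp_add, Real.rpow_def_of_pos hγ0]; ring
      calc (n : ℝ) * ((4 / δ) * Real.exp (c * n))
          ≤ (κ * Real.log γ + 1) * ((4 / δ) * (Real.exp c * γ ^ θ)) := by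
            have hn_nonneg : (0:ℝ) ≤ (n:ℝ) := Nat.cast_nonneg n
            gcongr
        _ = (κ * Real.log γ + 1) * ((4 / δ) * Real.exp c) * γ ^ θ := by ring
        _ < γ := hQ2
    have : (n : ℝ≥0∞) / p < ET := by
      rw [hdiv, hETγ]
      exact ENNReal.ofReal_lt_ofReal_iff hγ0 |>.mpr hreal
    exact absurd hboundET (not_le.mpr this)
  obtain ⟨k, hk⟩ := hpigeon
  set ν : ℕ := k * n with hν_def
  set S : Set (ℕ → X) := {ω | ν < T ω} with hS_def
  have hP0pos : 0 < Pinf S := by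
    by_contra h0
    push_neg at h0
    have h0' : Pinf S = 0 := le_antisymm h0 zero_le
    rw [hS_def] at h0'
    rw [h0', mul_zero] at hk
    exact absurd hk (by simp)
  have hP0top : Pinf S ≠ ⊤ := measure_ne_top _ _
  have hPcS : Pc ν S = Pinf S := agree_det Pinf Pc (hagree ν) (hDetgt ν)
  -- the bad event from the likelihood condition
  set Bset : Set (ℕ → X) := {ω | ∃ t : ℕ, 1 ≤ t ∧ t ≤ n ∧
      (((1 + ε) * I * n : ℝ) : EReal) ≤ lam Pinf Pc ν (ν + t) ω} with hBset_def
  have hBdet : Det (ν + n) Bset := by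
    intro ω ω' hag hω
    obtain ⟨t, ht1, htn, hlam⟩ := hω
    refine ⟨t, ht1, htn, ?_⟩
    have hcyl : cylOf (ν + t) ω' = cylOf (ν + t) ω := by
      ext ω''
      constructor <;> intro h i hi
      · rw [h i hi]; exact (hag i (by omega)).symm
      · rw [h i hi]; exact hag i (by omega)
    rw [lam, hcyl]
    exact hlam
  have hBmeas : MeasurableSet Bset := hBdet.measurableSet
  -- conditional probability of the bad event is small
  have hBbound : Pc ν (Bset ∩ S) ≤ ENNReal.ofReal (δ / 4) * Pc ν S := by
    refine cond_bound Pinf Pc (hagree ν) hBmeas (hDetgt ν) _ (fun xs hpos => ?_)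
    calc Pc ν (Bset ∩ cylEvent xs) / Pc ν (cylEvent xs)
        ≤ ⨆ xs' : {xs' : Fin ν → X // 0 < Pinf (cylEvent xs')},
          Pc ν (Bset ∩ cylEvent xs'.1) / Pc ν (cylEvent xs'.1) :=
          le_iSup (fun xs' : {xs' : Fin ν → X // 0 < Pinf (cylEvent xs')} =>
            Pc ν (Bset ∩ cylEvent xs'.1) / Pc ν (cylEvent xs'.1)) ⟨xs, hpos⟩
      _ ≤ ⨆ ν' : ℕ, ⨆ xs' : {xs' : Fin ν' → X // 0 < Pinf (cylEvent xs')},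
          Pc ν' ({ω | ∃ t : ℕ, 1 ≤ t ∧ t ≤ n ∧
              (((1 + ε) * I * n : ℝ) : EReal) ≤ lam Pinf Pc ν' (ν' + t) ω} ∩
            cylEvent xs'.1) / Pc ν' (cylEvent xs'.1) := by
          exact le_iSup (fun ν' : ℕ => ⨆ xs' : {xs' : Fin ν' → X // 0 < Pinf (cylEvent xs')},
            Pc ν' ({ω | ∃ t : ℕ, 1 ≤ t ∧ t ≤ n ∧
                (((1 + ε) * I * n : ℝ) : EReal) ≤ lam Pinf Pc ν' (ν' + t) ω} ∩
              cylEvent xs'.1) / Pc ν' (cylEvent xs'.1)) ν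
      _ ≤ ENNReal.ofReal (δ / 4) := (hN₀ n hN₀n).le
  -- the middle set and change of measure
  set Mid : Set (ℕ → X) := {ω | ν < T ω ∧ T ω ≤ ν + n} with hMid_def
  have hMidDet : Det (ν + n) Mid := by
    have : Mid = {ω : ℕ → X | ν < T ω} ∩ {ω | T ω ≤ ν + n} := by
      ext ω; simp [hMid_def, Set.mem_inter_iff]
    rw [this]
    exact ((hDetgt ν).mono (by omega)).inter (det_of_filt (hTfiltmeas (ν + n)))
  set A : Set (ℕ → X) := Mid \ Bset with hA_def
  have hADet : Det (ν + n) A := hMidDet.diff hBdet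
  have hAcom : Pc ν A ≤ ENNReal.ofReal (Real.exp (c * n)) * Pinf A := by
    refine change_of_measure Pinf Pc hADet _ (fun ω hω => ?_)
    have hnotB : ω ∉ Bset := hω.2
    have hlam_lt : lam Pinf Pc ν (ν + n) ω < (((1 + ε) * I * n : ℝ) : EReal) := by
      by_contra hge
      push_neg at hge
      exact hnotB ⟨n, hn1, le_rfl, hge⟩
    rw [lam] at hlam_lt
    have hexp_eq : (((1 + ε) * I * n : ℝ) : EReal)
        = ENNReal.log (EReal.exp (((1 + ε) * I * n : ℝ) : EReal)) := (EReal.log_exp _).symm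
    rw [hexp_eq, ENNReal.log_lt_log_iff] at hlam_lt
    rw [EReal.exp_coe] at hlam_lt
    have hcn : (1 + ε) * I * (n : ℝ) = c * n := by rw [hc_def]
    rw [hcn] at hlam_lt
    rcases eq_or_ne (Pinf (cylOf (ν + n) ω)) 0 with hq | hq
    · rcases eq_or_ne (Pc ν (cylOf (ν + n) ω)) 0 with hq' | hq'
      · rw [hq']; exact zero_le
      · exfalso
        rw [hq, ENNReal.div_zero hq'] at hlam_lt
        exact absurd hlam_lt (by simp)
    · have := (ENNReal.div_lt_iff (Or.inl hq) (Or.inl (measure_ne_top _ _))).mp hlam_lt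
      exact this.le
  have hmidbound : Pc ν Mid ≤ (ENNReal.ofReal (δ / 4) + ENNReal.ofReal (δ / 4)) * Pc ν S := by
    have hsub : Mid ⊆ A ∪ (Bset ∩ S) := by
      intro ω hω
      by_cases hB : ω ∈ Bset
      · exact Or.inr ⟨hB, hω.1⟩
      · exact Or.inl ⟨hω, hB⟩
    have hAbound : Pc ν A ≤ ENNReal.ofReal (δ / 4) * Pc ν S := by
      have h1 : Pinf A ≤ Pinf Mid := measure_mono Set.diff_subset
      have h2 : Pinf Mid < p * Pinf S := hk
      calc Pc ν A ≤ ENNReal.ofReal (Real.exp (c * n)) * Pinf A := hAcom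
        _ ≤ ENNReal.ofReal (Real.exp (c * n)) * (p * Pinf S) :=
            mul_le_mul_right (le_trans h1 h2.le) _
        _ = (ENNReal.ofReal (Real.exp (c * n)) * p) * Pinf S := by ring
        _ = ENNReal.ofReal (δ / 4) * Pc ν S := by
            rw [hPcS, hp_def, ← ENNReal.ofReal_mul (Real.exp_pos _).le]
            congr 2
            rw [Real.exp_neg]
            field_simp
    calc Pc ν Mid ≤ Pc ν (A ∪ (Bset ∩ S)) := measure_mono hsub
      _ ≤ Pc ν A + Pc ν (Bset ∩ S) := measure_union_le _ _
      _ ≤ ENNReal.ofReal (δ / 4) * Pc ν S + ENNReal.ofReal (δ / 4) * Pc ν S :=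
          add_le_add hAbound hBbound
      _ = (ENNReal.ofReal (δ / 4) + ENNReal.ofReal (δ / 4)) * Pc ν S := by ring
  have hhalf : (ENNReal.ofReal (δ / 4) + ENNReal.ofReal (δ / 4)) = ENNReal.ofReal (δ / 2) := by
    rw [← ENNReal.ofReal_add (by linarith) (by linarith)]
    congr 1
    ring
  -- tail bound under `Pc ν`
  have hPcS_ne_top : Pc ν S ≠ ⊤ := by rw [hPcS]; exact hP0top
  have hPcS_pos : 0 < Pc ν S := by rw [hPcS]; exact hP0pos
  have hdec : Pc ν S = Pc ν {ω | ν + n < T ω} + Pc ν Mid := by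
    have hu : S = {ω : ℕ → X | ν + n < T ω} ∪ Mid := by
      ext ω; simp only [hS_def, hMid_def, Set.mem_union, Set.mem_setOf_eq]; omega
    have hdis : Disjoint {ω : ℕ → X | ν + n < T ω} Mid := by
      rw [Set.disjoint_left]; intro ω h1 h2
      simp only [Set.mem_setOf_eq, hMid_def] at h1 h2; omega
    rw [hu, measure_union hdis hMidDet.measurableSet]
  have htail : ENNReal.ofReal (1 - δ / 2) * Pc ν S ≤ Pc ν {ω | ν + n < T ω} := by
    have h1 : Pc ν {ω | ν + n < T ω} = Pc ν S - Pc ν Mid :=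
      ENNReal.eq_sub_of_add_eq (by
        exact ne_top_of_le_ne_top hPcS_ne_top (hdec ▸ le_add_self)) hdec.symm
    rw [h1]
    have h2 : Pc ν Mid ≤ ENNReal.ofReal (δ / 2) * Pc ν S := by
      rw [← hhalf]; exact hmidbound
    calc ENNReal.ofReal (1 - δ / 2) * Pc ν S
        = (1 - ENNReal.ofReal (δ / 2)) * Pc ν S := by
          rw [← ENNReal.ofReal_one, ← ENNReal.ofReal_sub _ (by linarith)]
      _ = 1 * Pc ν S - ENNReal.ofReal (δ / 2) * Pc ν S :=
          ENNReal.sub_mul (fun _ _ => hPcS_ne_top)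
      _ = Pc ν S - ENNReal.ofReal (δ / 2) * Pc ν S := by rw [one_mul]
      _ ≤ Pc ν S - Pc ν Mid := tsub_le_tsub_left h2 _
  -- lower bound the conditional expected delay at `ν`
  have hnum : (n : ℝ≥0∞) * Pc ν {ω | ν + n < T ω}
      ≤ ∫⁻ ω in S, ((T ω - ν : ℕ) : ℝ≥0∞) ∂(Pc ν) := by
    calc (n : ℝ≥0∞) * Pc ν {ω | ν + n < T ω}
        = ∫⁻ _ in {ω | ν + n < T ω}, (n : ℝ≥0∞) ∂(Pc ν) := (setLIntegral_const _ _).symm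
      _ ≤ ∫⁻ ω in {ω | ν + n < T ω}, ((T ω - ν : ℕ) : ℝ≥0∞) ∂(Pc ν) := by
          refine setLIntegral_mono' (hTgt (ν + n)) (fun ω hω => ?_)
          have : n ≤ T ω - ν := by
            simp only [Set.mem_setOf_eq] at hω; omega
          exact_mod_cast Nat.cast_le.mpr this
      _ ≤ ∫⁻ ω in S, ((T ω - ν : ℕ) : ℝ≥0∞) ∂(Pc ν) := by
          refine lintegral_mono_set (fun ω hω => ?_)
          simp only [Set.mem_setOf_eq, hS_def] at hω ⊢; omega
  have hratio : (n : ℝ≥0∞) * ENNReal.ofReal (1 - δ / 2)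
      ≤ (∫⁻ ω in S, ((T ω - ν : ℕ) : ℝ≥0∞) ∂(Pc ν)) / Pc ν S := by
    have h1 : (n : ℝ≥0∞) * ENNReal.ofReal (1 - δ / 2) * Pc ν S
        ≤ ∫⁻ ω in S, ((T ω - ν : ℕ) : ℝ≥0∞) ∂(Pc ν) := by
      calc (n : ℝ≥0∞) * ENNReal.ofReal (1 - δ / 2) * Pc ν S
          = (n : ℝ≥0∞) * (ENNReal.ofReal (1 - δ / 2) * Pc ν S) := by ring
        _ ≤ (n : ℝ≥0∞) * Pc ν {ω | ν + n < T ω} := mul_le_mul_right htail _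
        _ ≤ _ := hnum
    calc (n : ℝ≥0∞) * ENNReal.ofReal (1 - δ / 2)
        = (n : ℝ≥0∞) * ENNReal.ofReal (1 - δ / 2) * Pc ν S / Pc ν S := by
          rw [mul_div_assoc, ENNReal.div_self hPcS_pos.ne' hPcS_ne_top, mul_one]
      _ ≤ _ := ENNReal.div_le_div_right h1 _
  -- final arithmetic
  have hfinal : ENNReal.ofReal ((1 - ε) * (1 - δ) * Real.log γ / I)
      ≤ (n : ℝ≥0∞) * ENNReal.ofReal (1 - δ / 2) := by
    have hreal : (1 - ε) * (1 - δ) * Real.log γ / I ≤ (n : ℝ) * (1 - δ / 2) := by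
      have h1 : (1 - ε) * (1 - δ / 2) / I * Real.log γ * (1 - δ / 2)
          ≤ (n : ℝ) * (1 - δ / 2) := by
        have := hκlog_le_n
        rw [hκ_def] at this
        nlinarith
      have h2 : (1 - ε) * (1 - δ) * Real.log γ / I
          ≤ (1 - ε) * (1 - δ / 2) / I * Real.log γ * (1 - δ / 2) := by
        rw [div_mul_eq_mul_div, div_mul_eq_mul_div, div_le_div_iff₀ hI hI]
        have hnn : 0 ≤ (1 - ε) * Real.log γ * I * (δ ^ 2 / 4) :=
          mul_nonneg (mul_nonneg (mul_nonneg (by linarith) hlogγ0) hI.le) (by positivity)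
        have hkey : (1 - ε) * (1 - δ / 2) * Real.log γ * (1 - δ / 2) * I
            - (1 - ε) * (1 - δ) * Real.log γ * I
            = (1 - ε) * Real.log γ * I * (δ ^ 2 / 4) := by ring
        linarith
      linarith
    calc ENNReal.ofReal ((1 - ε) * (1 - δ) * Real.log γ / I)
        ≤ ENNReal.ofReal ((n : ℝ) * (1 - δ / 2)) := ENNReal.ofReal_le_ofReal hreal
      _ = (n : ℝ≥0∞) * ENNReal.ofReal (1 - δ / 2) := by
          rw [ENNReal.ofReal_mul (Nat.cast_nonneg n), ENNReal.ofReal_natCast]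
  -- conclude via the supremum
  refine le_trans hfinal (le_trans hratio ?_)
  have hstep1 : (∫⁻ ω in S, ((T ω - ν : ℕ) : ℝ≥0∞) ∂(Pc ν)) / Pc ν S
      ≤ ⨆ _ : 0 < Pinf {ω | ν < T ω},
        (∫⁻ ω in {ω | ν < T ω}, ((T ω - ν : ℕ) : ℝ≥0∞) ∂(Pc ν)) / Pc ν {ω | ν < T ω} :=
    le_iSup (fun _ : 0 < Pinf {ω | ν < T ω} =>
      (∫⁻ ω in {ω | ν < T ω}, ((T ω - ν : ℕ) : ℝ≥0∞) ∂(Pc ν)) / Pc ν {ω | ν < T ω}) hP0pos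
  refine le_trans hstep1 ?_
  exact le_iSup (fun ν' : ℕ => ⨆ _ : 0 < Pinf {ω | ν' < T ω},
    (∫⁻ ω in {ω | ν' < T ω}, ((T ω - ν' : ℕ) : ℝ≥0∞) ∂(Pc ν')) / Pc ν' {ω | ν' < T ω}) ν

end QCPD
end
end
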